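/- arXiv:1407.2563 — 4 statements merged into one kernel-verified Lean document; each statement's English description precedes it below -/
import Mathlib

section
/- Suppose 1/2 < γ₀ < λ₀ < 1, h ∈ ℬ satisfies h(γ₀) = h(λ₀) = 0, the coefficients of h are eventually +1 (there exists N₀ with aₙ = 1 for all n ≥ N₀), h′(γ₀) < 0 and h′(λ₀) > 0. Then there exists N₁ ∈ ℕ such that for every N ≥ N₁ and every power series R(x) = ∑_{n≥0} rₙ xⁿ with coefficients rₙ ∈ {0,1}, the function f(x) = h(x) − x^N R(x) has zeros γ̃ and λ̃ in (0,1) satisfying 2γ₀^N R(γ₀)/(3|h′(γ₀)|) ≤ γ₀ − γ̃ ≤ 2γ₀^N R(γ₀)/|h′(γ₀)| and 2λ₀^N R(λ₀)/(3h′(λ₀)) ≤ λ̃ − λ₀ ≤ 2λ₀^N R(λ₀)/h′(λ₀). -/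
open Set Filter Topology

noncomputable section

/-- The function on `(-1,1)` defined by the power series with coefficient sequence `a`. -/
def seriesFun (a : ℕ → ℝ) (x : ℝ) : ℝ := ∑' n, a n * x ^ n

/-- `a` is the coefficient sequence of a power series in the class `ℬ`:
constant term `1` and all other coefficients in `{-1, 0, 1}`. -/
def memB (a : ℕ → ℝ) : Prop :=
  a 0 = 1 ∧ ∀ n, 1 ≤ n → a n = -1 ∨ a n = 0 ∨ a n = 1

/-- `a` is the coefficient sequence of a power series in the class `ℬ_{[-1,1]}`:
constant term `1` and all other coefficients in `[-1, 1]`. -/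
def memBI (a : ℕ → ℝ) : Prop :=
  a 0 = 1 ∧ ∀ n, 1 ≤ n → a n ∈ Set.Icc (-1 : ℝ) 1

/-- `F` has at least `k` zeros in `(0, t]`, counted with multiplicity
(multiplicity = order of vanishing). -/
def hasZeros (F : ℝ → ℝ) (k : ℕ) (t : ℝ) : Prop :=
  ∃ (s : Finset ℝ) (d : ℝ → ℕ),
    (∀ x ∈ s, x ∈ Set.Ioc (0 : ℝ) t ∧ 1 ≤ d x ∧ ∀ j < d x, iteratedDeriv j F x = 0) ∧
    k ≤ ∑ x ∈ s, d x

/-- `ξ_k(F)`: the `k`-th zero of `F` in `(0,1)` counted with multiplicity,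
with the convention `ξ_k(F) = 1` if there are fewer than `k` such zeros. -/
def xi (k : ℕ) (F : ℝ → ℝ) : ℝ :=
  sInf (insert 1 {t | t ∈ Set.Ioo (0 : ℝ) 1 ∧ hasZeros F k t})

/-- `α₂`: the smallest double zero in `(0,1)` of a power series in `ℬ_{[-1,1]}`. -/
def alpha2 : ℝ :=
  sInf {x | x ∈ Set.Ioo (0 : ℝ) 1 ∧
    ∃ a, memBI a ∧ seriesFun a x = 0 ∧ deriv (seriesFun a) x = 0}

/-- `α₃`: the smallest triple zero in `(0,1)` of a power series in `ℬ_{[-1,1]}`. -/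
def alpha3 : ℝ :=
  sInf {x | x ∈ Set.Ioo (0 : ℝ) 1 ∧
    ∃ a, memBI a ∧ seriesFun a x = 0 ∧ deriv (seriesFun a) x = 0 ∧
      iteratedDeriv 2 (seriesFun a) x = 0}

/-- The set of values `ξ₂(f)` over `f ∈ ℬ_{[-1,1]}` with `f(γ) = 0`. -/
def phiSet (γ : ℝ) : Set ℝ :=
  {y | ∃ a, memBI a ∧ seriesFun a γ = 0 ∧ y = xi 2 (seriesFun a)}

/-- `φ(γ) = min { ξ₂(f) : f ∈ ℬ_{[-1,1]}, f(γ) = 0 }`. -/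
def phi (γ : ℝ) : ℝ := sInf (phiSet γ)

/-- The set of values `ξ₃(f)` over `f ∈ ℬ_{[-1,1]}` with `f(γ) = 0`. -/
def psiSet (γ : ℝ) : Set ℝ :=
  {y | ∃ a, memBI a ∧ seriesFun a γ = 0 ∧ y = xi 3 (seriesFun a)}

/-- `ψ(γ) = min { ξ₃(f) : f ∈ ℬ_{[-1,1]}, f(γ) = 0 }`. -/
def psi (γ : ℝ) : ℝ := sInf (psiSet γ)

/-- The `(*)`-function `h_k^{(a)}(x) = 1 - x - ⋯ - x^(k-1) + a x^k + x^(k+1)/(1-x)`. -/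
def hstar (k : ℕ) (a : ℝ) (x : ℝ) : ℝ :=
  1 - ∑ i ∈ Finset.Ico 1 k, x ^ i + a * x ^ k + x ^ (k + 1) / (1 - x)

/-- The `(**)`-function
`H_{k,ℓ}^{(a,b)}(x) = 1 - ∑_{i=1}^{k-1} x^i + a x^k + ∑_{i=k+1}^{ℓ-1} x^i + b x^ℓ - x^(ℓ+1)/(1-x)`. -/
def Hstar (k l : ℕ) (a b : ℝ) (x : ℝ) : ℝ :=
  1 - ∑ i ∈ Finset.Ico 1 k, x ^ i + a * x ^ k + ∑ i ∈ Finset.Ico (k + 1) l, x ^ i +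
    b * x ^ l - x ^ (l + 1) / (1 - x)

/-- The set `𝒩₊`. -/
def Nplus : Set (ℝ × ℝ) :=
  {p | 0 < p.1 ∧ p.1 < p.2 ∧ p.2 < 1 ∧
    ∃ a, memB a ∧ seriesFun a p.1 = 0 ∧ seriesFun a p.2 = 0}

/-- The set `𝒩̃₊`. -/
def NtildePlus : Set (ℝ × ℝ) :=
  {p | p ∈ Nplus ∧ ∃ a, memB a ∧ seriesFun a p.1 = 0 ∧ seriesFun a p.2 = 0 ∧
    hasZeros (seriesFun a) 3 p.2}

/-- The "trivial" part `𝒩_t` of the connectedness locus. -/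
def Nt : Set (ℝ × ℝ) :=
  {p | p.1 ∈ Set.Ioo (-1 : ℝ) 1 ∧ p.2 ∈ Set.Ioo (-1 : ℝ) 1 ∧ 1 / 2 ≤ |p.1 * p.2|}

/-- The region `Δ`. -/
def Delta : Set (ℝ × ℝ) :=
  {p | p.1 ∈ Set.Ioo (0 : ℝ) 1 ∧ p.2 ∈ Set.Ioo (0 : ℝ) 1 ∧ p.1 < p.2 ∧ p.1 * p.2 < 1 / 2}

lemma summable_coeff {a : ℕ → ℝ} (ha : ∀ n, |a n| ≤ 1) {x : ℝ} (hx : |x| < 1) :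
    Summable fun n => a n * x ^ n := by
  apply Summable.of_norm
  refine Summable.of_nonneg_of_le (fun n => norm_nonneg _) (fun n => ?_)
    (summable_geometric_of_lt_one (abs_nonneg x) hx)
  rw [norm_mul, norm_pow, Real.norm_eq_abs, Real.norm_eq_abs]
  calc |a n| * |x| ^ n ≤ 1 * |x| ^ n := by
        exact mul_le_mul_of_nonneg_right (ha n) (by positivity)
    _ = |x| ^ n := one_mul _

lemma mem_ball1 {x : ℝ} (hx : |x| < 1) : x ∈ Metric.eball (0 : ℝ) 1 := by
  rw [EMetric.mem_ball, edist_dist, dist_zero_right, Real.norm_eq_abs]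
  exact_mod_cast ENNReal.ofReal_lt_one.2 hx

lemma hasFPS {a : ℕ → ℝ} (ha : ∀ n, |a n| ≤ 1) :
    HasFPowerSeriesOnBall (seriesFun a) (FormalMultilinearSeries.ofScalars ℝ a) 0 1 := by
  constructor
  · refine FormalMultilinearSeries.le_radius_of_bound _ 1 (fun n => ?_)
    rw [FormalMultilinearSeries.ofScalars_norm]
    simpa using ha n
  · exact one_pos
  · intro y hy
    have hy' : |y| < 1 := by
      rw [EMetric.mem_ball, edist_dist, dist_zero_right, Real.norm_eq_abs] at hy
      exact_mod_cast ENNReal.ofReal_lt_one.1 (by exact_mod_cast hy)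
    have hs := (summable_coeff ha hy').hasSum
    rw [zero_add]
    have h2 : (fun n => (FormalMultilinearSeries.ofScalars ℝ a n) fun _ => y)
        = fun n => a n * y ^ n := by
      funext n
      rw [FormalMultilinearSeries.ofScalars_apply_eq, smul_eq_mul]
    show HasSum (fun n => (FormalMultilinearSeries.ofScalars ℝ a n) fun _ => y) (seriesFun a y)
    rw [h2]
    exact hs

lemma analyticSeries {a : ℕ → ℝ} (ha : ∀ n, |a n| ≤ 1) :
    AnalyticOnNhd ℝ (seriesFun a) (Metric.eball (0:ℝ) 1) :=
  (hasFPS ha).analyticOnNhd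

lemma diffSeries {a : ℕ → ℝ} (ha : ∀ n, |a n| ≤ 1) {x : ℝ} (hx : |x| < 1) :
    DifferentiableAt ℝ (seriesFun a) x :=
  (analyticSeries ha x (mem_ball1 hx)).differentiableAt

lemma contDerivSeries {a : ℕ → ℝ} (ha : ∀ n, |a n| ≤ 1) {x : ℝ} (hx : |x| < 1) :
    ContinuousAt (deriv (seriesFun a)) x :=
  ((analyticSeries ha).deriv x (mem_ball1 hx)).continuousAt

lemma slope_mvt {H : ℝ → ℝ} {u v : ℝ} (huv : u < v)
    (hd : ∀ t ∈ Icc u v, DifferentiableAt ℝ H t) :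
    ∃ ξ ∈ Ioo u v, H v - H u = deriv H ξ * (v - u) := by
  obtain ⟨ξ, hξ, hslope⟩ := exists_hasDerivAt_eq_slope H (deriv H) huv
    (fun t ht => (hd t ht).continuousAt.continuousWithinAt)
    (fun t ht => (hd t (Ioo_subset_Icc_self ht)).hasDerivAt)
  refine ⟨ξ, hξ, ?_⟩
  rw [hslope, div_mul_cancel₀ _ (by linarith : v - u ≠ 0)]

lemma pow_sub_pow_le_g {x y β : ℝ} (hβ : 1/2 ≤ β) (hx : 0 ≤ x) (hxy : x ≤ y) (hyβ : y ≤ β) :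
    ∀ m : ℕ, y ^ m - x ^ m ≤ (y - x) * (2 * ((m+1) * β ^ m)) := by
  have hy0 : 0 ≤ y := hx.trans hxy
  have hβ0 : (0:ℝ) ≤ β := by linarith
  intro m
  induction m with
  | zero => simp; nlinarith
  | succ m ih =>
    have hpow : x ^ m ≤ β ^ m := pow_le_pow_left₀ hx (hxy.trans hyβ) m
    have hpow2 : y ^ m ≤ β ^ m := pow_le_pow_left₀ hy0 hyβ m
    have hxm : (0:ℝ) ≤ x ^ m := by positivity
    have hβm : (0:ℝ) ≤ β ^ m := by positivity
    have hsub : 0 ≤ y ^ m - x ^ m := by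
      have := pow_le_pow_left₀ hx hxy m; linarith
    have key : y ^ (m+1) - x ^ (m+1) = y * (y ^ m - x ^ m) + (y - x) * x ^ m := by ring
    have h1 : y * (y ^ m - x ^ m) ≤ β * ((y - x) * (2 * ((m+1) * β ^ m))) := by
      apply mul_le_mul hyβ ih hsub hβ0
    have h2 : (y - x) * x ^ m ≤ (y - x) * β ^ m := by
      apply mul_le_mul_of_nonneg_left hpow (by linarith)
    have h3 : β * ((y - x) * (2 * ((m+1) * β ^ m))) + (y - x) * β ^ m
        ≤ (y - x) * (2 * (((m:ℝ)+1+1) * β ^ (m+1))) := by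
      have hb : β ^ m ≤ 2 * β ^ (m+1) := by
        have : β ^ (m+1) = β * β ^ m := by ring
        nlinarith
      have h0yx : 0 ≤ y - x := by linarith
      have : β * ((y - x) * (2 * ((m+1) * β ^ m))) = (y - x) * (2 * ((m+1) * (β * β ^ m))) := by
        ring
      rw [this]
      have hbb : β * β ^ m = β ^ (m+1) := by ring
      rw [hbb]
      nlinarith [mul_le_mul_of_nonneg_left hb h0yx]
    push_cast
    push_cast at ih h3
    linarith

set_option maxHeartbeats 1000000 in
/-- Lemma on nearby zeros: if `h ∈ ℬ` vanishes at `1/2 < γ₀ < λ₀ < 1`, has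
coefficients eventually `+1`, `h'(γ₀) < 0 < h'(λ₀)`, then for all large `N` and every
0-1 power series `R`, the function `f(x) = h(x) - x^N R(x)` has zeros `γ̃, λ̃` with the
stated two-sided estimates. -/
theorem stmt8 (γ₀ lam₀ : ℝ) (h12 : 1 / 2 < γ₀) (hgl : γ₀ < lam₀) (hlam1 : lam₀ < 1)
    (h : ℕ → ℝ) (hB : memB h) (hz0 : seriesFun h γ₀ = 0) (hz1 : seriesFun h lam₀ = 0)
    (hev : ∃ N₀ : ℕ, ∀ n, N₀ ≤ n → h n = 1)
    (hd0 : deriv (seriesFun h) γ₀ < 0) (hd1 : 0 < deriv (seriesFun h) lam₀) :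
    ∃ N₁ : ℕ, ∀ N, N₁ ≤ N → ∀ r : ℕ → ℝ, (∀ n, r n = 0 ∨ r n = 1) →
      ∃ γt lamt : ℝ, γt ∈ Set.Ioo (0 : ℝ) 1 ∧ lamt ∈ Set.Ioo (0 : ℝ) 1 ∧
        seriesFun h γt - γt ^ N * (∑' n, r n * γt ^ n) = 0 ∧
        seriesFun h lamt - lamt ^ N * (∑' n, r n * lamt ^ n) = 0 ∧
        2 * γ₀ ^ N * (∑' n, r n * γ₀ ^ n) / (3 * |deriv (seriesFun h) γ₀|) ≤ γ₀ - γt ∧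
        γ₀ - γt ≤ 2 * γ₀ ^ N * (∑' n, r n * γ₀ ^ n) / |deriv (seriesFun h) γ₀| ∧
        2 * lam₀ ^ N * (∑' n, r n * lam₀ ^ n) / (3 * deriv (seriesFun h) lam₀) ≤ lamt - lam₀ ∧
        lamt - lam₀ ≤ 2 * lam₀ ^ N * (∑' n, r n * lam₀ ^ n) / deriv (seriesFun h) lam₀ := by
  clear hev
  have hhabs : ∀ n, |h n| ≤ 1 := by
    intro n
    rcases Nat.eq_zero_or_pos n with h0 | h1
    · rw [h0, hB.1]; norm_num
    · rcases hB.2 n h1 with e | e | e <;> rw [e] <;> norm_num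
  set H := seriesFun h with hHdef
  clear_value H
  have hγpos : (0:ℝ) < γ₀ := by linarith
  have hγ1 : γ₀ < 1 := lt_trans hgl hlam1
  have hLpos : (0:ℝ) < lam₀ := by linarith
  set β : ℝ := (1 + lam₀) / 2 with hβdef
  have hβ12 : 1 / 2 ≤ β := by rw [hβdef]; linarith
  have hβ0 : (0:ℝ) < β := by linarith
  have hβ1 : β < 1 := by rw [hβdef]; linarith
  have hLβ : lam₀ < β := by rw [hβdef]; linarith
  have hγβ : γ₀ < β := lt_trans hgl hLβ
  clear_value β
  set D : ℝ := -deriv H γ₀ with hDdef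
  have hD : 0 < D := by rw [hDdef]; linarith
  have hDγeq : deriv H γ₀ = -D := by rw [hDdef]; ring
  have habsD : |deriv H γ₀| = D := by rw [hDdef]; exact abs_of_neg hd0
  clear_value D
  set E : ℝ := deriv H lam₀ with hEdef
  have hE : 0 < E := hd1
  clear_value E
  -- continuity of the derivative at the two zeros
  have hcγ : ContinuousAt (deriv H) γ₀ := by
    rw [hHdef]; exact contDerivSeries hhabs (by rw [abs_of_pos hγpos]; exact hγ1)
  obtain ⟨δγ, hδγ0, hδγ⟩ := Metric.continuousAt_iff.1 hcγ (D / 4) (by linarith)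
  have hcL : ContinuousAt (deriv H) lam₀ := by
    rw [hHdef]; exact contDerivSeries hhabs (by rw [abs_of_pos hLpos]; exact hlam1)
  obtain ⟨δL, hδL0, hδL⟩ := Metric.continuousAt_iff.1 hcL (E / 4) (by linarith)
  -- tail bounds
  set g : ℕ → ℝ := fun m => 2 * ((m + 1) * β ^ m) with hgdef
  have hgsum : Summable g := by
    have h1 : Summable (fun n : ℕ => (n : ℝ) ^ 1 * β ^ n) :=
      summable_pow_mul_geometric_of_norm_lt_one 1
        (by rw [Real.norm_eq_abs, abs_of_pos hβ0]; exact hβ1)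
    have h2 : Summable (fun n : ℕ => β ^ n) := summable_geometric_of_lt_one hβ0.le hβ1
    refine ((h1.add h2).mul_left 2).congr fun n => ?_
    rw [hgdef]; push_cast; ring
  have hgnn : ∀ m, 0 ≤ g m := by
    intro m; rw [hgdef]
    have : (0:ℝ) ≤ β ^ m := pow_nonneg hβ0.le m
    positivity
  set T : ℕ → ℝ := fun N => ∑' k, g (k + N) with hTdef
  have hT0 : Tendsto T atTop (𝓝 0) := by rw [hTdef]; exact tendsto_sum_nat_add g
  clear_value g T
  set Bmax : ℕ → ℝ := fun N => β ^ N * (1 - β)⁻¹ with hBmaxdef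
  have hBmax0 : Tendsto Bmax atTop (𝓝 0) := by
    rw [hBmaxdef]
    have := (tendsto_pow_atTop_nhds_zero_of_lt_one hβ0.le hβ1).mul_const (1 - β)⁻¹
    simpa using this
  clear_value Bmax
  -- eventual smallness conditions
  have c1 : Tendsto (fun N => 2 * Bmax N / D) atTop (𝓝 0) := by
    have := (hBmax0.const_mul 2).div_const D
    simpa using this
  have c2 : Tendsto (fun N => 2 * Bmax N / E) atTop (𝓝 0) := by
    have := (hBmax0.const_mul 2).div_const E
    simpa using this
  have e1 : ∀ᶠ N in atTop, 2 * Bmax N / D < min δγ γ₀ :=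
    c1.eventually_lt_const (lt_min hδγ0 hγpos)
  have e2 : ∀ᶠ N in atTop, 2 * Bmax N / E < min δL (β - lam₀) :=
    c2.eventually_lt_const (lt_min hδL0 (by linarith))
  have e3 : ∀ᶠ N in atTop, T N < min D E / 8 := by
    have hm : 0 < min D E := lt_min hD hE
    exact hT0.eventually_lt_const (by linarith)
  obtain ⟨N₁, hN₁⟩ := Filter.eventually_atTop.1 ((e1.and e2).and e3)
  refine ⟨N₁, fun N hN r hr => ?_⟩
  obtain ⟨⟨hc1, hc2⟩, hc3⟩ := hN₁ N hN
  by_cases hr0 : ∀ n, r n = 0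
  · refine ⟨γ₀, lam₀, ⟨hγpos, hγ1⟩, ⟨hLpos, hlam1⟩, ?_, ?_, ?_, ?_, ?_, ?_⟩ <;>
      simp [hr0, hz0, hz1]
  · push_neg at hr0
    obtain ⟨m, hm⟩ := hr0
    have hrm : r m = 1 := (hr m).resolve_left hm
    have hrabs : ∀ n, |r n| ≤ 1 := fun n => by rcases hr n with e | e <;> rw [e] <;> norm_num
    have hrnn : ∀ n, 0 ≤ r n := fun n => by rcases hr n with e | e <;> rw [e] <;> norm_num
    have hr1 : ∀ n, r n ≤ 1 := fun n => by rcases hr n with e | e <;> rw [e] <;> norm_num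
    have habs_lt : ∀ {x : ℝ}, 0 ≤ x → x ≤ β → |x| < 1 := by
      intro x hx0 hxβ; rw [abs_of_nonneg hx0]; linarith
    have hsumQ : ∀ {x : ℝ}, |x| < 1 → Summable (fun n => r n * x ^ n) := fun hx =>
      summable_coeff hrabs hx
    have hsumP : ∀ {x : ℝ}, |x| < 1 → Summable (fun n => r n * x ^ (N + n)) := by
      intro x hx
      refine ((hsumQ hx).mul_left (x ^ N)).congr fun n => ?_
      rw [pow_add]; ring
    have hPtsum : ∀ x : ℝ, x ^ N * seriesFun r x = ∑' n, r n * x ^ (N + n) := by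
      intro x
      show x ^ N * ∑' n, r n * x ^ n = _
      rw [← tsum_mul_left]
      exact tsum_congr fun n => by rw [pow_add]; ring
    -- monotonicity of the perturbation
    have hmono : ∀ x y : ℝ, 0 ≤ x → x ≤ y → y ≤ β →
        x ^ N * seriesFun r x ≤ y ^ N * seriesFun r y := by
      intro x y hx hxy hyβ
      rw [hPtsum x, hPtsum y]
      refine Summable.tsum_le_tsum (fun n => ?_) (hsumP (habs_lt hx (hxy.trans hyβ)))
        (hsumP (habs_lt (hx.trans hxy) hyβ))
      exact mul_le_mul_of_nonneg_left (pow_le_pow_left₀ hx hxy _) (hrnn n)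
    -- Lipschitz-type bound for the perturbation
    have hlip : ∀ x y : ℝ, 0 ≤ x → x ≤ y → y ≤ β →
        y ^ N * seriesFun r y - x ^ N * seriesFun r x ≤ (y - x) * T N := by
      intro x y hx hxy hyβ
      have hsx := hsumP (habs_lt hx (hxy.trans hyβ))
      have hsy := hsumP (habs_lt (hx.trans hxy) hyβ)
      rw [hPtsum x, hPtsum y, ← Summable.tsum_sub hsy hsx]
      have hrhs : Summable (fun n => (y - x) * g (n + N)) :=
        ((summable_nat_add_iff N).2 hgsum).mul_left _
      have hterm : ∀ n, r n * y ^ (N + n) - r n * x ^ (N + n) ≤ (y - x) * g (n + N) := by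
        intro n
        have hple : x ^ (N + n) ≤ y ^ (N + n) := pow_le_pow_left₀ hx hxy _
        have h1 : r n * y ^ (N + n) - r n * x ^ (N + n) ≤ y ^ (N + n) - x ^ (N + n) := by
          have := mul_le_mul_of_nonneg_right (hr1 n) (sub_nonneg.2 hple)
          linarith only [this]
        have h2 : y ^ (N + n) - x ^ (N + n) ≤ (y - x) * g (N + n) := by
          rw [hgdef]
          exact_mod_cast pow_sub_pow_le_g hβ12 hx hxy hyβ (N + n)
        rw [Nat.add_comm n N]
        linarith
      calc ∑' n, (r n * y ^ (N + n) - r n * x ^ (N + n))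
          ≤ ∑' n, (y - x) * g (n + N) := Summable.tsum_le_tsum hterm (hsy.sub hsx) hrhs
        _ = (y - x) * T N := by simp only [hTdef]; exact tsum_mul_left
    -- bounds on the perturbation values
    have hQnn : ∀ {x : ℝ}, 0 ≤ x → 0 ≤ seriesFun r x := fun hx0 =>
      tsum_nonneg fun n => mul_nonneg (hrnn n) (pow_nonneg hx0 n)
    have hQle : ∀ {x : ℝ}, 0 ≤ x → x ≤ β → seriesFun r x ≤ (1 - β)⁻¹ := by
      intro x hx0 hxβ
      have hx1 : x < 1 := by linarith
      calc seriesFun r x ≤ ∑' n : ℕ, x ^ n :=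
            Summable.tsum_le_tsum (fun n => mul_le_of_le_one_left (pow_nonneg hx0 n) (hr1 n))
              (hsumQ (habs_lt hx0 hxβ)) (summable_geometric_of_lt_one hx0 hx1)
        _ = (1 - x)⁻¹ := tsum_geometric_of_lt_one hx0 hx1
        _ ≤ (1 - β)⁻¹ := by
            apply inv_anti₀ (by linarith) (by linarith)
    have hPle : ∀ {z : ℝ}, 0 ≤ z → z ≤ β → z ^ N * seriesFun r z ≤ Bmax N := by
      intro z hz0' hzβ
      have hp : z ^ N ≤ β ^ N := pow_le_pow_left₀ hz0' hzβ N
      calc z ^ N * seriesFun r z ≤ β ^ N * (1 - β)⁻¹ :=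
            mul_le_mul hp (hQle hz0' hzβ) (hQnn hz0') (pow_nonneg hβ0.le N)
        _ = Bmax N := by simp only [hBmaxdef]
    -- positivity of the perturbation at the two zeros
    have hQpos : ∀ {z : ℝ}, 0 < z → z < 1 → 0 < seriesFun r z := by
      intro z hz0' hz1'
      have hle : r m * z ^ m ≤ seriesFun r z :=
        Summable.le_tsum (hsumQ (by rw [abs_of_pos hz0']; exact hz1')) m
          (fun j _ => mul_nonneg (hrnn j) (pow_nonneg hz0'.le j))
      have h0 : (0:ℝ) < r m * z ^ m := by rw [hrm, one_mul]; exact pow_pos hz0' m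
      linarith
    set ρ : ℝ := γ₀ ^ N * seriesFun r γ₀ with hρdef
    clear_value ρ
    have hρpos : 0 < ρ := by
      rw [hρdef]; exact mul_pos (pow_pos hγpos N) (hQpos hγpos hγ1)
    have hρle : ρ ≤ Bmax N := by rw [hρdef]; exact hPle hγpos.le hγβ.le
    have hcρ : 2 * ρ / D < min δγ γ₀ := by
      have hmul : 2 * ρ * D⁻¹ ≤ 2 * Bmax N * D⁻¹ :=
        mul_le_mul_of_nonneg_right (by linarith) (inv_pos.2 hD).le
      rw [div_eq_mul_inv]
      calc 2 * ρ * D⁻¹ ≤ 2 * Bmax N * D⁻¹ := hmul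
        _ = 2 * Bmax N / D := (div_eq_mul_inv _ _).symm
        _ < min δγ γ₀ := hc1
    set ρ' : ℝ := lam₀ ^ N * seriesFun r lam₀ with hρ'def
    clear_value ρ'
    have hρ'pos : 0 < ρ' := by
      rw [hρ'def]; exact mul_pos (pow_pos hLpos N) (hQpos hLpos hlam1)
    have hρ'le : ρ' ≤ Bmax N := by rw [hρ'def]; exact hPle hLpos.le hLβ.le
    have hcρ' : 2 * ρ' / E < min δL (β - lam₀) := by
      have hmul : 2 * ρ' * E⁻¹ ≤ 2 * Bmax N * E⁻¹ :=
        mul_le_mul_of_nonneg_right (by linarith) (inv_pos.2 hE).le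
      rw [div_eq_mul_inv]
      calc 2 * ρ' * E⁻¹ ≤ 2 * Bmax N * E⁻¹ := hmul
        _ = 2 * Bmax N / E := (div_eq_mul_inv _ _).symm
        _ < min δL (β - lam₀) := hc2
    have hTD : T N ≤ D / 8 := by
      have := min_le_left D E
      have h8 : min D E / 8 ≤ D / 8 := by linarith
      linarith [hc3]
    have hTE : T N ≤ E / 8 := by
      have := min_le_right D E
      have h8 : min D E / 8 ≤ E / 8 := by linarith
      linarith [hc3]
    have hTnn : 0 ≤ T N := by rw [hTdef]; exact tsum_nonneg fun k => hgnn _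
    -- MVT bounds near γ₀
    have hHboundγ : ∀ x : ℝ, γ₀ - min δγ γ₀ < x → x < γ₀ →
        3 * D / 4 * (γ₀ - x) ≤ H x ∧ H x ≤ 5 * D / 4 * (γ₀ - x) := by
      intro x hx1 hx2
      have hminγ := min_le_right δγ γ₀
      have hminδ := min_le_left δγ γ₀
      have hx0 : 0 < x := by linarith
      obtain ⟨ξ, hξ, heq⟩ := slope_mvt (H := H) hx2 (fun t ht => by
        rw [hHdef]
        exact diffSeries hhabs
          (by rw [abs_of_pos (lt_of_lt_of_le hx0 ht.1)]; exact lt_of_le_of_lt ht.2 hγ1))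
      have hξd : dist ξ γ₀ < δγ := by
        rw [Real.dist_eq, abs_of_nonpos (by linarith [hξ.2] : ξ - γ₀ ≤ 0)]
        linarith [hξ.1]
      have hder := hδγ hξd
      rw [Real.dist_eq] at hder
      obtain ⟨hder1, hder2⟩ := abs_lt.1 hder
      rw [hDγeq] at hder1 hder2
      have h1 : deriv H ξ ≤ -(3 * D / 4) := by linarith
      have h2 : -(5 * D / 4) ≤ deriv H ξ := by linarith
      have e1' := mul_le_mul_of_nonneg_right h1 (show (0:ℝ) ≤ γ₀ - x by linarith)
      have e2' := mul_le_mul_of_nonneg_right h2 (show (0:ℝ) ≤ γ₀ - x by linarith)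
      rw [hz0] at heq
      constructor
      · linarith only [e1', heq]
      · linarith only [e2', heq]
    -- MVT bounds near lam₀
    have hHboundL : ∀ x : ℝ, lam₀ < x → x < lam₀ + min δL (β - lam₀) →
        3 * E / 4 * (x - lam₀) ≤ H x ∧ H x ≤ 5 * E / 4 * (x - lam₀) := by
      intro x hx1 hx2
      have hminβ := min_le_right δL (β - lam₀)
      have hminδ := min_le_left δL (β - lam₀)
      have hx1' : x < 1 := by linarith
      obtain ⟨ξ, hξ, heq⟩ := slope_mvt (H := H) hx1 (fun t ht => by
        rw [hHdef]
        exact diffSeries hhabs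
          (by rw [abs_of_pos (lt_of_lt_of_le hLpos ht.1)]; exact lt_of_le_of_lt ht.2 hx1'))
      have hξd : dist ξ lam₀ < δL := by
        rw [Real.dist_eq, abs_of_nonneg (by linarith [hξ.1] : (0:ℝ) ≤ ξ - lam₀)]
        linarith [hξ.2]
      have hder := hδL hξd
      rw [Real.dist_eq] at hder
      obtain ⟨hder1, hder2⟩ := abs_lt.1 hder
      rw [← hEdef] at hder1 hder2
      have h1 : 3 * E / 4 ≤ deriv H ξ := by linarith
      have h2 : deriv H ξ ≤ 5 * E / 4 := by linarith
      have e1' := mul_le_mul_of_nonneg_right h1 (show (0:ℝ) ≤ x - lam₀ by linarith)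
      have e2' := mul_le_mul_of_nonneg_right h2 (show (0:ℝ) ≤ x - lam₀ by linarith)
      rw [hz1] at heq
      constructor
      · linarith only [e1', heq]
      · linarith only [e2', heq]
    -- the γ side zero, by IVT
    have hminγ := min_le_right δγ γ₀
    have hminδ := min_le_left δγ γ₀
    have hcρpos : 0 < 2 * ρ / D := div_pos (by linarith) hD
    have hcρ3pos : 0 < 2 * ρ / (3 * D) := div_pos (by linarith) (by linarith)
    have hcρ3lt : 2 * ρ / (3 * D) < 2 * ρ / D :=
      div_lt_div_of_pos_left (by linarith) hD (by linarith)
    set a : ℝ := γ₀ - 2 * ρ / D with hadef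
    set b : ℝ := γ₀ - 2 * ρ / (3 * D) with hbdef
    clear_value a b
    have ha0 : 0 < a := by rw [hadef]; linarith
    have hab : a < b := by rw [hadef, hbdef]; linarith
    have hbγ : b < γ₀ := by rw [hbdef]; linarith
    have hfa_pos : 0 < H a - a ^ N * seriesFun r a := by
      have hb := hHboundγ a (by rw [hadef]; linarith) (by rw [hadef]; linarith)
      have hgap : γ₀ - a = 2 * ρ / D := by rw [hadef]; ring
      have h3 : 3 * D / 4 * (γ₀ - a) = 3 * ρ / 2 := by
        rw [hgap]; field_simp; ring
      have hPa : a ^ N * seriesFun r a ≤ ρ := by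
        rw [hρdef]; exact hmono a γ₀ ha0.le (by linarith) hγβ.le
      linarith [hb.1]
    have hfb_nonpos : H b - b ^ N * seriesFun r b ≤ 0 := by
      have hb' := hHboundγ b (by rw [hbdef]; linarith) hbγ
      have hgap : γ₀ - b = 2 * ρ / (3 * D) := by rw [hbdef]; ring
      have h5 : 5 * D / 4 * (γ₀ - b) = 5 * ρ / 6 := by
        rw [hgap]; field_simp; ring
      have hlipb : γ₀ ^ N * seriesFun r γ₀ - b ^ N * seriesFun r b ≤ (γ₀ - b) * T N :=
        hlip b γ₀ (ha0.le.trans hab.le) (by linarith) hγβ.le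
      have hTbound : (γ₀ - b) * T N ≤ ρ / 12 := by
        rw [hgap]
        calc 2 * ρ / (3 * D) * T N ≤ 2 * ρ / (3 * D) * (D / 8) :=
              mul_le_mul_of_nonneg_left hTD hcρ3pos.le
          _ = ρ / 12 := by field_simp; ring
      have hPb : 11 * ρ / 12 ≤ b ^ N * seriesFun r b := by
        rw [← hρdef] at hlipb
        linarith
      linarith [hb'.2]
    have hcontγ : ContinuousOn (fun x => H x - x ^ N * seriesFun r x) (Icc a b) := by
      rw [hHdef]
      intro t ht
      have ht1 : |t| < 1 := by
        rw [abs_of_pos (lt_of_lt_of_le ha0 ht.1)]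
        linarith [ht.2]
      exact (((diffSeries hhabs ht1).continuousAt).sub
        (((continuous_pow N).continuousAt).mul (diffSeries hrabs ht1).continuousAt)).continuousWithinAt
    obtain ⟨γt, hγtmem, hγteq⟩ := intermediate_value_Icc' hab.le hcontγ
      ⟨hfb_nonpos, hfa_pos.le⟩
    -- the lam side zero, by IVT
    have hminβ' := min_le_right δL (β - lam₀)
    have hminδ' := min_le_left δL (β - lam₀)
    have hcρ'pos : 0 < 2 * ρ' / E := div_pos (by linarith) hE
    have hcρ'3pos : 0 < 2 * ρ' / (3 * E) := div_pos (by linarith) (by linarith)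
    have hcρ'3lt : 2 * ρ' / (3 * E) < 2 * ρ' / E :=
      div_lt_div_of_pos_left (by linarith) hE (by linarith)
    set a' : ℝ := lam₀ + 2 * ρ' / (3 * E) with ha'def
    set b' : ℝ := lam₀ + 2 * ρ' / E with hb'def
    clear_value a' b'
    have ha'L : lam₀ < a' := by rw [ha'def]; linarith
    have ha'b' : a' < b' := by rw [ha'def, hb'def]; linarith
    have hb'β : b' < β := by rw [hb'def]; linarith
    have hfa'_nonpos : H a' - a' ^ N * seriesFun r a' ≤ 0 := by
      have hb := hHboundL a' ha'L (by rw [ha'def]; linarith)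
      have hgap : a' - lam₀ = 2 * ρ' / (3 * E) := by rw [ha'def]; ring
      have h5 : 5 * E / 4 * (a' - lam₀) = 5 * ρ' / 6 := by
        rw [hgap]; field_simp; ring
      have hPa' : ρ' ≤ a' ^ N * seriesFun r a' := by
        rw [hρ'def]; exact hmono lam₀ a' hLpos.le ha'L.le (by linarith)
      linarith [hb.2]
    have hfb'_pos : 0 < H b' - b' ^ N * seriesFun r b' := by
      have hb := hHboundL b' (by rw [hb'def]; linarith) (by rw [hb'def]; linarith)
      have hgap : b' - lam₀ = 2 * ρ' / E := by rw [hb'def]; ring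
      have h3 : 3 * E / 4 * (b' - lam₀) = 3 * ρ' / 2 := by
        rw [hgap]; field_simp; ring
      have hlipb : b' ^ N * seriesFun r b' - lam₀ ^ N * seriesFun r lam₀ ≤ (b' - lam₀) * T N :=
        hlip lam₀ b' hLpos.le (by linarith) hb'β.le
      have hTbound : (b' - lam₀) * T N ≤ ρ' / 4 := by
        rw [hgap]
        calc 2 * ρ' / E * T N ≤ 2 * ρ' / E * (E / 8) :=
              mul_le_mul_of_nonneg_left hTE hcρ'pos.le
          _ = ρ' / 4 := by field_simp; ring
      have hPb' : b' ^ N * seriesFun r b' ≤ 5 * ρ' / 4 := by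
        rw [← hρ'def] at hlipb
        linarith
      linarith [hb.1]
    have hcontL : ContinuousOn (fun x => H x - x ^ N * seriesFun r x) (Icc a' b') := by
      rw [hHdef]
      intro t ht
      have ht1 : |t| < 1 := by
        rw [abs_of_pos (lt_of_lt_of_le (by linarith : (0:ℝ) < a') ht.1)]
        linarith [ht.2]
      exact (((diffSeries hhabs ht1).continuousAt).sub
        (((continuous_pow N).continuousAt).mul (diffSeries hrabs ht1).continuousAt)).continuousWithinAt
    obtain ⟨lamt, hlamtmem, hlamteq⟩ := intermediate_value_Icc ha'b'.le hcontL
      ⟨hfa'_nonpos, hfb'_pos.le⟩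
    -- package
    refine ⟨γt, lamt, ⟨by linarith [hγtmem.1], by linarith [hγtmem.2]⟩,
      ⟨by linarith [hlamtmem.1], by linarith [hlamtmem.2]⟩, hγteq, hlamteq, ?_, ?_, ?_, ?_⟩
    · show 2 * γ₀ ^ N * seriesFun r γ₀ / (3 * |deriv H γ₀|) ≤ γ₀ - γt
      rw [habsD]
      have heq' : 2 * γ₀ ^ N * seriesFun r γ₀ / (3 * D) = 2 * ρ / (3 * D) := by
        rw [hρdef]; ring
      rw [heq']
      have := hγtmem.2
      rw [hbdef] at this
      linarith
    · show γ₀ - γt ≤ 2 * γ₀ ^ N * seriesFun r γ₀ / |deriv H γ₀|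
      rw [habsD]
      have heq' : 2 * γ₀ ^ N * seriesFun r γ₀ / D = 2 * ρ / D := by
        rw [hρdef]; ring
      rw [heq']
      have := hγtmem.1
      rw [hadef] at this
      linarith
    · show 2 * lam₀ ^ N * seriesFun r lam₀ / (3 * E) ≤ lamt - lam₀
      have heq' : 2 * lam₀ ^ N * seriesFun r lam₀ / (3 * E) = 2 * ρ' / (3 * E) := by
        rw [hρ'def]; ring
      rw [heq']
      have := hlamtmem.1
      rw [ha'def] at this
      linarith
    · show lamt - lam₀ ≤ 2 * lam₀ ^ N * seriesFun r lam₀ / E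
      have heq' : 2 * lam₀ ^ N * seriesFun r lam₀ / E = 2 * ρ' / E := by
        rw [hρ'def]; ring
      rw [heq']
      have := hlamtmem.2
      rw [hb'def] at this
      linarith
end
end

section
/- If (γₙ, λₙ) ∈ 𝒩̃₊ for all n and (γₙ, λₙ) → (γ, λ) with (γ, λ) ∈ Δ, then (γ, λ) ∈ 𝒩̃₊. In other words, 𝒩̃₊ ∩ Δ is relatively closed in Δ. -/
open Set Filter Topology

noncomputable section

namespace Stmt10

/-- coefficient sequence of the derivative series -/
def sh (c : ℕ → ℝ) (k : ℕ) : ℝ := ((k : ℝ) + 1) * c (k + 1)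

/-- polynomial bound on coefficients -/
def PB (C : ℝ) (m : ℕ) (c : ℕ → ℝ) : Prop := ∀ k : ℕ, |c k| ≤ C * ((k : ℝ) + 1) ^ m

lemma PB.sh' {C : ℝ} {m : ℕ} {c : ℕ → ℝ} (h : PB C m c) (hC : 0 ≤ C) :
    PB (C * 2 ^ m) (m + 1) (sh c) := by
  intro k
  have h1 := h (k + 1)
  push_cast at h1
  have hk : (0:ℝ) ≤ (k:ℝ) + 1 := by positivity
  calc |sh c k| = ((k:ℝ)+1) * |c (k+1)| := by rw [Stmt10.sh, abs_mul, abs_of_nonneg hk]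
    _ ≤ ((k:ℝ)+1) * (C * ((k:ℝ)+1+1) ^ m) := by gcongr
    _ ≤ ((k:ℝ)+1) * (C * (2*((k:ℝ)+1)) ^ m) := by gcongr <;> linarith
    _ = C * 2^m * ((k:ℝ)+1)^(m+1) := by rw [mul_pow]; ring

lemma summable_pb (m : ℕ) {r : ℝ} (hr : |r| < 1) :
    Summable fun k : ℕ => ((k : ℝ) + 1) ^ m * r ^ k := by
  have h0 : Summable fun k : ℕ => (k : ℝ) ^ m * |r| ^ k :=
    summable_pow_mul_geometric_of_norm_lt_one m (by rwa [Real.norm_eq_abs, abs_abs])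
  have h1 : Summable fun k : ℕ => (2:ℝ) ^ m * ((k:ℝ) ^ m * |r| ^ k) := h0.mul_left _
  apply Summable.of_norm_bounded_eventually_nat h1
  filter_upwards [eventually_ge_atTop 1] with k hk
  have hk1 : (1:ℝ) ≤ (k:ℝ) := by exact_mod_cast hk
  have h2 : ((k:ℝ)+1) ^ m ≤ (2*(k:ℝ)) ^ m := by gcongr; linarith
  have h3 : ‖((k : ℝ) + 1) ^ m * r ^ k‖ = ((k:ℝ)+1)^m * |r|^k := by
    rw [norm_mul, Real.norm_eq_abs, Real.norm_eq_abs, abs_pow, abs_pow,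
      abs_of_nonneg (by positivity : (0:ℝ) ≤ (k:ℝ)+1)]
  rw [h3, mul_pow] at *
  calc ((k:ℝ)+1)^m * |r|^k ≤ (2:ℝ)^m * (k:ℝ)^m * |r|^k := by
        gcongr
    _ = (2:ℝ)^m * ((k:ℝ)^m * |r|^k) := by ring

lemma summable_of_pb {C : ℝ} {m : ℕ} {c : ℕ → ℝ} (h : PB C m c) {x : ℝ} (hx : |x| < 1) :
    Summable fun k => c k * x ^ k := by
  apply Summable.of_norm_bounded (g := fun k : ℕ => C * (((k:ℝ)+1)^m * |x| ^ k))
    ((summable_pb m (by rwa [abs_abs])).mul_left C)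
  intro k
  rw [norm_mul, Real.norm_eq_abs, Real.norm_eq_abs, abs_pow]
  calc |c k| * |x| ^ k ≤ (C * ((k:ℝ)+1)^m) * |x| ^ k := by gcongr; exact h k
    _ = C * (((k:ℝ)+1)^m * |x|^k) := by ring

lemma summable_deriv_aux {C : ℝ} {m : ℕ} {c : ℕ → ℝ} (h : PB C m c) (hC : 0 ≤ C)
    {x : ℝ} (hx : |x| < 1) :
    Summable fun k : ℕ => (k:ℝ) * c k * x ^ (k - 1) := by
  rw [← summable_nat_add_iff 1]
  have : (fun k : ℕ => ((k+1:ℕ):ℝ) * c (k+1) * x ^ (k + 1 - 1)) = fun k => sh c k * x ^ k := by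
    funext k; rw [Stmt10.sh]; push_cast; ring_nf
  rw [this]
  exact summable_of_pb (h.sh' hC) hx

lemma tsum_deriv_aux {C : ℝ} {m : ℕ} {c : ℕ → ℝ} (h : PB C m c) (hC : 0 ≤ C)
    {x : ℝ} (hx : |x| < 1) :
    (∑' k : ℕ, (k:ℝ) * c k * x ^ (k - 1)) = seriesFun (sh c) x := by
  rw [Summable.tsum_eq_zero_add (summable_deriv_aux h hC hx)]
  simp only [Nat.cast_zero, zero_mul, zero_add]
  rw [seriesFun]
  congr 1
  funext k
  rw [Stmt10.sh]; push_cast; ring_nf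

lemma hasDerivAt_seriesFun {C : ℝ} {m : ℕ} {c : ℕ → ℝ} (h : PB C m c) (hC : 0 ≤ C)
    {x : ℝ} (hx : |x| < 1) :
    HasDerivAt (seriesFun c) (seriesFun (sh c) x) x := by
  set r : ℝ := (|x| + 1) / 2 with hrdef
  have hax : 0 ≤ |x| := abs_nonneg x
  have hxr : |x| < r := by rw [hrdef]; linarith
  have hr0 : 0 ≤ r := by rw [hrdef]; linarith
  have hr1 : |r| < 1 := by rw [abs_of_nonneg hr0, hrdef]; linarith
  have key : HasDerivAt (seriesFun c) (∑' k : ℕ, (k:ℝ) * c k * x ^ (k-1)) x := by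
    apply hasDerivAt_of_tendstoLocallyUniformlyOn (Metric.isOpen_ball (x := (0:ℝ)) (ε := r))
      (f := fun (t : Finset ℕ) y => ∑ k ∈ t, c k * y ^ k)
      (f' := fun (t : Finset ℕ) y => ∑ k ∈ t, (k:ℝ) * c k * y ^ (k-1))
      (l := (atTop : Filter (Finset ℕ)))
      (g := seriesFun c)
      (g' := fun y => ∑' k : ℕ, (k:ℝ) * c k * y ^ (k-1))
    · apply TendstoUniformlyOn.tendstoLocallyUniformlyOn
      apply tendstoUniformlyOn_tsum (u := fun k : ℕ => (k:ℝ) * |c k| * r ^ (k-1))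
      · rw [← summable_nat_add_iff 1]
        have : (fun k : ℕ => ((k+1:ℕ):ℝ) * |c (k+1)| * r ^ (k + 1 - 1))
            = fun k => |c (k+1)| * ((k:ℝ)+1) * r ^ k := by
          funext k; push_cast; ring_nf
        rw [this]
        have hb : PB C m (fun k => |c k|) := by intro k; simpa using h k
        have := summable_of_pb ((hb.sh' hC)) hr1
        apply this.congr
        intro k
        simp only [Stmt10.sh]
        ring
      · intro k y hy
        rw [Metric.mem_ball, Real.dist_eq, sub_zero] at hy
        rw [norm_mul, norm_mul, Real.norm_eq_abs, Real.norm_eq_abs, Real.norm_eq_abs,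
          abs_pow, Nat.abs_cast]
        gcongr
    · apply Eventually.of_forall
      intro t y _
      apply HasDerivAt.fun_sum
      intro k _
      have := (hasDerivAt_pow k y).const_mul (c k)
      exact this.congr_deriv (by ring)
    · intro y hy
      rw [Metric.mem_ball, Real.dist_eq, sub_zero] at hy
      exact (summable_of_pb h (hy.trans (by rw [abs_of_nonneg hr0] at hr1; exact hr1))).hasSum
    · rw [Metric.mem_ball, Real.dist_eq, sub_zero]; exact hxr
  rwa [tsum_deriv_aux h hC hx] at key

lemma deriv_seriesFun {C : ℝ} {m : ℕ} {c : ℕ → ℝ} (h : PB C m c) (hC : 0 ≤ C)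
    {x : ℝ} (hx : |x| < 1) : deriv (seriesFun c) x = seriesFun (sh c) x :=
  (hasDerivAt_seriesFun h hC hx).deriv

lemma isOpen_unit : IsOpen {y : ℝ | |y| < 1} := by
  have : {y : ℝ | |y| < 1} = abs ⁻¹' Iio 1 := rfl
  rw [this]
  exact isOpen_Iio.preimage continuous_abs

lemma iteratedDeriv_two_seriesFun {C : ℝ} {m : ℕ} {c : ℕ → ℝ} (h : PB C m c) (hC : 0 ≤ C)
    {x : ℝ} (hx : |x| < 1) :
    iteratedDeriv 2 (seriesFun c) x = seriesFun (sh (sh c)) x := by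
  have h1 : iteratedDeriv 2 (seriesFun c) = deriv (deriv (seriesFun c)) := by
    rw [iteratedDeriv_succ, iteratedDeriv_one]
  rw [h1]
  have h2 : deriv (seriesFun c) =ᶠ[𝓝 x] seriesFun (sh c) := by
    filter_upwards [isOpen_unit.mem_nhds hx] with y hy
    exact deriv_seriesFun h hC hy
  rw [h2.deriv_eq]
  exact deriv_seriesFun (h.sh' hC) (by positivity) hx

lemma tendsto_seriesFun {C : ℝ} {m : ℕ} (hC : 0 ≤ C) {b : ℕ → ℕ → ℝ} {c : ℕ → ℝ}
    (hb : ∀ n, PB C m (b n)) (hbc : ∀ k, Tendsto (fun n => b n k) atTop (𝓝 (c k)))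
    {x : ℕ → ℝ} {y : ℝ} (hx : Tendsto x atTop (𝓝 y)) (hy : |y| < 1) :
    Tendsto (fun n => seriesFun (b n) (x n)) atTop (𝓝 (seriesFun c y)) := by
  have hc : PB C m c := fun k =>
    le_of_tendsto (hbc k).abs (Eventually.of_forall fun n => hb n k)
  set r : ℝ := (|y| + 1) / 2 with hrdef
  have hay : 0 ≤ |y| := abs_nonneg y
  have hyr : |y| < r := by rw [hrdef]; linarith
  have hr0 : 0 ≤ r := by rw [hrdef]; linarith
  have hrlt : r < 1 := by rw [hrdef]; linarith
  have hr1 : |r| < 1 := by rwa [abs_of_nonneg hr0]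
  have hev : ∀ᶠ n in atTop, |x n| ≤ r := (hx.abs.eventually_lt_const hyr).mono fun n h => h.le
  have hdiff : Tendsto (fun n => seriesFun (b n) (x n) - seriesFun c (x n)) atTop (𝓝 0) := by
    have hT : Tendsto (fun n => ∑' k : ℕ, |b n k - c k| * r ^ k) atTop
        (𝓝 (∑' _ : ℕ, (0:ℝ))) := by
      apply tendsto_tsum_of_dominated_convergence
        (bound := fun k : ℕ => 2 * C * (((k:ℝ)+1)^m * r ^ k))
      · exact (summable_pb m hr1).mul_left _
      · intro k
        have : Tendsto (fun n => |b n k - c k| * r ^ k) atTop (𝓝 (|c k - c k| * r ^ k)) :=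
          (((hbc k).sub tendsto_const_nhds).abs).mul_const _
        simpa using this
      · apply Eventually.of_forall
        intro n k
        have h1 : |b n k - c k| ≤ 2 * C * ((k:ℝ)+1)^m := by
          calc |b n k - c k| ≤ |b n k| + |c k| := abs_sub _ _
            _ ≤ C * ((k:ℝ)+1)^m + C * ((k:ℝ)+1)^m := add_le_add (hb n k) (hc k)
            _ = 2 * C * ((k:ℝ)+1)^m := by ring
        have h2 : (0:ℝ) ≤ |b n k - c k| * r ^ k := by positivity
        rw [Real.norm_eq_abs, abs_of_nonneg h2]
        calc |b n k - c k| * r ^ k ≤ (2 * C * ((k:ℝ)+1)^m) * r ^ k := by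
              gcongr
          _ = 2 * C * (((k:ℝ)+1)^m * r ^ k) := by ring
    rw [tsum_zero] at hT
    apply squeeze_zero_norm' ?_ hT
    filter_upwards [hev] with n hn
    have hxn1 : |x n| < 1 := lt_of_le_of_lt hn hrlt
    have h1 : Summable fun k => b n k * (x n) ^ k := summable_of_pb (hb n) hxn1
    have h2 : Summable fun k => c k * (x n) ^ k := summable_of_pb hc hxn1
    have h3 : seriesFun (b n) (x n) - seriesFun c (x n)
        = ∑' k : ℕ, (b n k - c k) * (x n) ^ k := by
      rw [seriesFun, seriesFun, ← Summable.tsum_sub h1 h2]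
      congr 1; funext k; ring
    rw [Real.norm_eq_abs, h3]
    have habs : Summable fun k => |(b n k - c k) * (x n) ^ k| := (h1.sub h2).abs.congr
      (fun k => by rw [sub_mul])
    have h4 : Summable fun k : ℕ => |b n k - c k| * r ^ k := by
      apply Summable.of_nonneg_of_le (fun k => by positivity)
        (fun k => ?_) ((summable_pb m hr1).mul_left (2*C))
      calc |b n k - c k| * r ^ k ≤ (2 * C * ((k:ℝ)+1)^m) * r ^ k := by
            gcongr
            calc |b n k - c k| ≤ |b n k| + |c k| := abs_sub _ _
              _ ≤ C * ((k:ℝ)+1)^m + C * ((k:ℝ)+1)^m := add_le_add (hb n k) (hc k)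
              _ = 2 * C * ((k:ℝ)+1)^m := by ring
        _ = 2 * C * ((((k:ℝ)+1)^m) * r ^ k) := by ring
    have habs' : Summable fun k : ℕ => |b n k - c k| * |x n| ^ k :=
      habs.congr (fun k => by rw [abs_mul, abs_pow])
    calc |∑' k : ℕ, (b n k - c k) * (x n) ^ k|
        ≤ ∑' k : ℕ, |b n k - c k| * |x n| ^ k := by
          have := norm_tsum_le_tsum_norm (f := fun k : ℕ => (b n k - c k) * (x n) ^ k)
            (habs.congr (fun k => (Real.norm_eq_abs _).symm))
          simpa [Real.norm_eq_abs, abs_mul, abs_pow] using this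
      _ ≤ ∑' k : ℕ, |b n k - c k| * r ^ k := by
          apply Summable.tsum_le_tsum _ habs' h4
          intro k
          gcongr
  have hcont : Tendsto (fun n => seriesFun c (x n)) atTop (𝓝 (seriesFun c y)) :=
    ((hasDerivAt_seriesFun hc hC hy).continuousAt.tendsto).comp hx
  have := hdiff.add hcont
  simpa using this

lemma seriesFun_eq_zero_of_lim {C : ℝ} {m : ℕ} (hC : 0 ≤ C) {b : ℕ → ℕ → ℝ} {c : ℕ → ℝ}
    (hb : ∀ n, PB C m (b n)) (hbc : ∀ k, Tendsto (fun n => b n k) atTop (𝓝 (c k)))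
    {x : ℕ → ℝ} {y : ℝ} (hx : Tendsto x atTop (𝓝 y)) (hy : |y| < 1)
    (hz : ∀ n, seriesFun (b n) (x n) = 0) : seriesFun c y = 0 := by
  have h := tendsto_seriesFun hC hb hbc hx hy
  have h2 : Tendsto (fun _ : ℕ => (0:ℝ)) atTop (𝓝 (seriesFun c y)) := by
    apply h.congr
    intro n
    rw [hz n]
  exact (tendsto_nhds_unique tendsto_const_nhds h2).symm

lemma memB_abs_le {a : ℕ → ℝ} (ha : memB a) : ∀ k, |a k| ≤ 1 := by
  intro k
  match k with
  | 0 => rw [ha.1]; norm_num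
  | (k+1) =>
    rcases ha.2 (k+1) (by omega) with h | h | h <;> rw [h] <;> norm_num

lemma memB_pb {a : ℕ → ℝ} (ha : memB a) : PB 1 0 a := fun k => by
  simpa using memB_abs_le ha k

set_option maxHeartbeats 1000000 in
lemma seriesFun_pos {a : ℕ → ℝ} (ha : memB a) {x : ℝ} (h0 : 0 ≤ x) (h1 : x < 1/2) :
    0 < seriesFun a x := by
  have hx1 : |x| < 1 := by rw [abs_of_nonneg h0]; linarith
  have hsum : Summable fun k => a k * x ^ k := summable_of_pb (memB_pb ha) hx1
  have hgeo : Summable fun k : ℕ => x ^ k := summable_geometric_of_lt_one h0 (by linarith)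
  have hgeom : Summable fun k : ℕ => x ^ (k+1) := (summable_nat_add_iff 1).mpr hgeo
  have htail : Summable fun k : ℕ => a (k+1) * x ^ (k+1) := (summable_nat_add_iff 1).mpr hsum
  have hsplit : seriesFun a x = 1 + ∑' k : ℕ, a (k+1) * x ^ (k+1) := by
    rw [seriesFun, Summable.tsum_eq_zero_add hsum, ha.1]; simp
  have hbound : |∑' k : ℕ, a (k+1) * x ^ (k+1)| ≤ ∑' k : ℕ, x ^ (k+1) := by
    have habs : Summable fun k : ℕ => |a (k+1) * x ^ (k+1)| := htail.abs
    have habs' : Summable fun k : ℕ => |a (k+1)| * |x| ^ (k+1) :=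
      habs.congr (fun k => by rw [abs_mul, abs_pow])
    calc |∑' k : ℕ, a (k+1) * x ^ (k+1)| ≤ ∑' k : ℕ, |a (k+1)| * |x| ^ (k+1) := by
          have := norm_tsum_le_tsum_norm (f := fun k : ℕ => a (k+1) * x ^ (k+1))
            (habs.congr (fun k => (Real.norm_eq_abs _).symm))
          simpa [Real.norm_eq_abs, abs_mul, abs_pow] using this
      _ ≤ ∑' k : ℕ, x ^ (k+1) := by
          apply Summable.tsum_le_tsum _ habs' hgeom
          intro k
          rw [abs_of_nonneg h0]
          have := memB_abs_le ha (k+1)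
          calc |a (k+1)| * x ^ (k+1) ≤ 1 * x ^ (k+1) := by gcongr
            _ = x ^ (k+1) := one_mul _
  have hgeomsum : (∑' k : ℕ, x ^ (k+1)) = x * (1-x)⁻¹ := by
    have h5 : (∑' k : ℕ, x ^ (k+1)) = x * ∑' k : ℕ, x ^ k := by
      rw [← tsum_mul_left]
      congr 1; funext k; ring
    rw [h5, tsum_geometric_of_lt_one h0 (by linarith)]
  have hlt : x * (1-x)⁻¹ < 1 := by
    rw [← div_eq_mul_inv, div_lt_one (by linarith)]
    linarith
  rw [hsplit]
  have := (abs_le.mp (hbound.trans_eq hgeomsum)).1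
  linarith

lemma half_le_of_zero {a : ℕ → ℝ} (ha : memB a) {x : ℝ} (hx0 : 0 < x)
    (hz : seriesFun a x = 0) : 1/2 ≤ x := by
  by_contra h
  push_neg at h
  exact absurd hz (ne_of_gt (seriesFun_pos ha hx0.le h))

lemma sort3 {P : ℝ → Prop} {u v w : ℝ} (huv : u ≠ v) (huw : u ≠ w) (hvw : v ≠ w)
    (hu : P u) (hv : P v) (hw : P w) :
    ∃ x₁ x₂ x₃, x₁ < x₂ ∧ x₂ < x₃ ∧ P x₁ ∧ P x₂ ∧ P x₃ := by
  rcases lt_or_gt_of_ne huv with h1 | h1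
  · rcases lt_or_gt_of_ne hvw with h2 | h2
    · exact ⟨u, v, w, h1, h2, hu, hv, hw⟩
    · rcases lt_or_gt_of_ne huw with h3 | h3
      · exact ⟨u, w, v, h3, h2, hu, hw, hv⟩
      · exact ⟨w, u, v, h3, h1, hw, hu, hv⟩
  · rcases lt_or_gt_of_ne huw with h2 | h2
    · exact ⟨v, u, w, h1, h2, hv, hu, hw⟩
    · rcases lt_or_gt_of_ne hvw with h3 | h3
      · exact ⟨v, w, u, h3, h2, hv, hw, hu⟩
      · exact ⟨w, v, u, h3, h1, hw, hv, hu⟩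

lemma hasZeros_extract {F : ℝ → ℝ} {t : ℝ} (h : hasZeros F 3 t) :
    ∃ x₁ x₂ x₃ : ℝ, x₁ ∈ Ioc (0:ℝ) t ∧ x₂ ∈ Ioc (0:ℝ) t ∧ x₃ ∈ Ioc (0:ℝ) t ∧
      x₁ ≤ x₂ ∧ x₂ ≤ x₃ ∧ F x₁ = 0 ∧ F x₂ = 0 ∧ F x₃ = 0 ∧
      (x₁ = x₂ → deriv F x₁ = 0) ∧ (x₂ = x₃ → deriv F x₂ = 0) ∧
      (x₁ = x₃ → iteratedDeriv 2 F x₁ = 0) := by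
  obtain ⟨s, d, hs, hsum⟩ := h
  have hF0 : ∀ x ∈ s, F x = 0 := fun x hx => by
    have := (hs x hx).2.2 0 (by have := (hs x hx).2.1; omega)
    simpa [iteratedDeriv_zero] using this
  have hF1 : ∀ x ∈ s, 2 ≤ d x → deriv F x = 0 := fun x hx h2 => by
    have := (hs x hx).2.2 1 (by omega)
    simpa [iteratedDeriv_one] using this
  have hF2 : ∀ x ∈ s, 3 ≤ d x → iteratedDeriv 2 F x = 0 := fun x hx h3 =>
    (hs x hx).2.2 2 (by omega)
  by_cases h3 : ∃ x ∈ s, 3 ≤ d x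
  · obtain ⟨x, hx, hdx⟩ := h3
    exact ⟨x, x, x, (hs x hx).1, (hs x hx).1, (hs x hx).1, le_refl _, le_refl _,
      hF0 x hx, hF0 x hx, hF0 x hx, fun _ => hF1 x hx (by omega), fun _ => hF1 x hx (by omega),
      fun _ => hF2 x hx hdx⟩
  · by_cases h2 : ∃ x ∈ s, 2 ≤ d x
    · obtain ⟨x, hx, hdx⟩ := h2
      have hy : ∃ y ∈ s, y ≠ x := by
        by_contra hc
        push_neg at hc
        have hsub : s ⊆ {x} := fun y hy => Finset.mem_singleton.mpr (hc y hy)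
        have hle : ∑ z ∈ s, d z ≤ ∑ z ∈ ({x} : Finset ℝ), d z :=
          Finset.sum_le_sum_of_subset hsub
        rw [Finset.sum_singleton] at hle
        push_neg at h3
        have := h3 x hx
        omega
      obtain ⟨y, hys, hyx⟩ := hy
      rcases lt_or_gt_of_ne hyx with hlt | hgt
      · exact ⟨y, x, x, (hs y hys).1, (hs x hx).1, (hs x hx).1, hlt.le, le_refl _,
          hF0 y hys, hF0 x hx, hF0 x hx,
          fun he => absurd he (ne_of_lt hlt), fun _ => hF1 x hx hdx,
          fun he => absurd he (ne_of_lt hlt)⟩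
      · exact ⟨x, x, y, (hs x hx).1, (hs x hx).1, (hs y hys).1, le_refl _, hgt.le,
          hF0 x hx, hF0 x hx, hF0 y hys,
          fun _ => hF1 x hx hdx, fun he => absurd he (ne_of_lt hgt),
          fun he => absurd he (ne_of_lt hgt)⟩
    · push_neg at h2
      have hcard : 3 ≤ s.card := by
        have hle : ∑ z ∈ s, d z ≤ ∑ _z ∈ s, 1 :=
          Finset.sum_le_sum (fun z hz => by have := h2 z hz; omega)
        rw [Finset.sum_const, smul_eq_mul, mul_one] at hle
        omega
      obtain ⟨u, v, w, hu, hv, hw, huv, huw, hvw⟩ := Finset.two_lt_card_iff.mp (show 2 < s.card by omega)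
      obtain ⟨x₁, x₂, x₃, h12, h23, hp1, hp2, hp3⟩ :=
        sort3 (P := fun z => z ∈ Ioc (0:ℝ) t ∧ F z = 0) huv huw hvw
          ⟨(hs u hu).1, hF0 u hu⟩ ⟨(hs v hv).1, hF0 v hv⟩ ⟨(hs w hw).1, hF0 w hw⟩
      exact ⟨x₁, x₂, x₃, hp1.1, hp2.1, hp3.1, h12.le, h23.le, hp1.2, hp2.2, hp3.2,
        fun he => absurd he (ne_of_lt h12), fun he => absurd he (ne_of_lt h23),
        fun he => absurd he (ne_of_lt (h12.trans h23))⟩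

lemma hasZeros_of_triple {F : ℝ → ℝ} {t x₁ x₂ x₃ : ℝ}
    (h1 : x₁ ∈ Ioc (0:ℝ) t) (h3 : x₃ ∈ Ioc (0:ℝ) t)
    (h12 : x₁ ≤ x₂) (h23 : x₂ ≤ x₃)
    (hz1 : F x₁ = 0) (hz2 : F x₂ = 0) (hz3 : F x₃ = 0)
    (e12 : x₁ = x₂ → deriv F x₁ = 0) (e23 : x₂ = x₃ → deriv F x₂ = 0)
    (e13 : x₁ = x₃ → iteratedDeriv 2 F x₁ = 0) :
    hasZeros F 3 t := by
  classical
  have h2 : x₂ ∈ Ioc (0:ℝ) t := ⟨lt_of_lt_of_le h1.1 h12, le_trans h23 h3.2⟩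
  rcases eq_or_lt_of_le h12 with he12 | hl12 <;> rcases eq_or_lt_of_le h23 with he23 | hl23
  · -- all equal
    refine ⟨{x₁}, fun _ => 3, ?_, ?_⟩
    · intro z hz
      rw [Finset.mem_singleton] at hz
      subst hz
      refine ⟨h1, by norm_num, ?_⟩
      intro j hj
      have hj3 : j < 3 := hj
      clear hj
      interval_cases j
      · simpa [iteratedDeriv_zero] using hz1
      · simpa [iteratedDeriv_one] using e12 he12
      · exact e13 (he12.trans he23)
    · simp
  · -- x₁ = x₂ < x₃
    have hne : x₁ ≠ x₃ := by rw [he12]; exact ne_of_lt hl23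
    refine ⟨{x₁, x₃}, fun z => if z = x₁ then 2 else 1, ?_, ?_⟩
    · intro z hz
      rcases Finset.mem_insert.mp hz with rfl | hz
      · beta_reduce
        rw [if_pos rfl]
        refine ⟨h1, by norm_num, ?_⟩
        intro j hj
        interval_cases j
        · simpa [iteratedDeriv_zero] using hz1
        · simpa [iteratedDeriv_one] using e12 he12
      · rw [Finset.mem_singleton] at hz
        subst hz
        beta_reduce
        rw [if_neg (Ne.symm hne)]
        refine ⟨h3, le_refl _, ?_⟩
        intro j hj
        interval_cases j
        simpa [iteratedDeriv_zero] using hz3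
    · rw [Finset.sum_pair hne]
      beta_reduce
      rw [if_pos rfl, if_neg (Ne.symm hne)]
  · -- x₁ < x₂ = x₃
    have hne : x₁ ≠ x₂ := ne_of_lt hl12
    refine ⟨{x₁, x₂}, fun z => if z = x₂ then 2 else 1, ?_, ?_⟩
    · intro z hz
      rcases Finset.mem_insert.mp hz with rfl | hz
      · beta_reduce
        rw [if_neg hne]
        refine ⟨h1, le_refl _, ?_⟩
        intro j hj
        interval_cases j
        simpa [iteratedDeriv_zero] using hz1
      · rw [Finset.mem_singleton] at hz
        subst hz
        beta_reduce
        rw [if_pos rfl]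
        refine ⟨h2, by norm_num, ?_⟩
        intro j hj
        interval_cases j
        · simpa [iteratedDeriv_zero] using hz2
        · simpa [iteratedDeriv_one] using e23 he23
    · rw [Finset.sum_pair hne]
      beta_reduce
      rw [if_neg hne, if_pos rfl]
  · -- all distinct
    have hne12 : x₁ ≠ x₂ := ne_of_lt hl12
    have hne23 : x₂ ≠ x₃ := ne_of_lt hl23
    have hne13 : x₁ ≠ x₃ := ne_of_lt (hl12.trans hl23)
    refine ⟨{x₁, x₂, x₃}, fun _ => 1, ?_, ?_⟩
    · intro z hz
      simp only [Finset.mem_insert, Finset.mem_singleton] at hz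
      have hone : ∀ y : ℝ, F y = 0 → y ∈ Ioc (0:ℝ) t →
          y ∈ Ioc (0:ℝ) t ∧ 1 ≤ (fun _ : ℝ => 1) y ∧
            ∀ j < (fun _ : ℝ => 1) y, iteratedDeriv j F y = 0 := by
        intro y hFy hyt
        refine ⟨hyt, le_refl _, ?_⟩
        intro j hj
        have hj1 : j < 1 := hj
        interval_cases j
        simpa [iteratedDeriv_zero] using hFy
      rcases hz with rfl | rfl | rfl
      · exact hone z hz1 h1
      · exact hone z hz2 h2
      · exact hone z hz3 h3
    · rw [Finset.sum_const, smul_eq_mul, mul_one]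
      rw [Finset.card_insert_of_notMem (by simp [hne12, hne13]),
        Finset.card_insert_of_notMem (by simp [hne23]), Finset.card_singleton]

lemma rolle_triple {F : ℝ → ℝ} {x₁ x₂ x₃ : ℝ} (h12 : x₁ ≤ x₂) (h23 : x₂ ≤ x₃)
    (hcont : ContinuousOn F (Icc x₁ x₃)) (hcont' : ContinuousOn (deriv F) (Icc x₁ x₃))
    (hz1 : F x₁ = 0) (hz2 : F x₂ = 0) (hz3 : F x₃ = 0)
    (e12 : x₁ = x₂ → deriv F x₁ = 0) (e23 : x₂ = x₃ → deriv F x₂ = 0)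
    (e13 : x₁ = x₃ → iteratedDeriv 2 F x₁ = 0) :
    ∃ c ∈ Icc x₁ x₂, ∃ c' ∈ Icc x₂ x₃, ∃ e ∈ Icc x₁ x₃,
      deriv F c = 0 ∧ deriv F c' = 0 ∧ iteratedDeriv 2 F e = 0 := by
  have hsub1 : Icc x₁ x₂ ⊆ Icc x₁ x₃ := Icc_subset_Icc (le_refl _) h23
  have hsub2 : Icc x₂ x₃ ⊆ Icc x₁ x₃ := Icc_subset_Icc h12 (le_refl _)
  have hid2 : iteratedDeriv 2 F = deriv (deriv F) := by
    rw [iteratedDeriv_succ, iteratedDeriv_one]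
  rcases eq_or_lt_of_le (h12.trans h23) with he13 | hl13
  · -- all equal
    have he12 : x₁ = x₂ := le_antisymm h12 (he13 ▸ h23)
    have he23 : x₂ = x₃ := le_antisymm h23 (he13 ▸ h12)
    exact ⟨x₁, ⟨le_refl _, h12⟩, x₂, ⟨le_refl _, h23⟩, x₁, ⟨le_refl _, h12.trans h23⟩,
      e12 he12, e23 he23, e13 he13⟩
  · -- x₁ < x₃ : get c ∈ [x₁,x₂] with deriv F c = 0 and c < x₂ or c = x₂ only when x₂ < x₃...
    -- get c and c' with c < c'
    have hcc : ∃ c ∈ Icc x₁ x₂, ∃ c' ∈ Icc x₂ x₃, deriv F c = 0 ∧ deriv F c' = 0 ∧ c < c' := by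
      rcases eq_or_lt_of_le h12 with he12 | hl12
      · -- x₁ = x₂ < x₃
        have hl23 : x₂ < x₃ := lt_of_le_of_ne h23 (fun h => (he12.trans h ▸ hl13).false)
        obtain ⟨c', hc'mem, hc'⟩ := exists_deriv_eq_zero hl23 (hcont.mono hsub2)
          (hz2.trans hz3.symm)
        exact ⟨x₁, ⟨le_refl _, h12⟩, c', ⟨hc'mem.1.le, hc'mem.2.le⟩, e12 he12, hc',
          he12 ▸ hc'mem.1⟩
      · rcases eq_or_lt_of_le h23 with he23 | hl23
        · -- x₁ < x₂ = x₃
          obtain ⟨c, hcmem, hc⟩ := exists_deriv_eq_zero hl12 (hcont.mono hsub1)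
            (hz1.trans hz2.symm)
          exact ⟨c, ⟨hcmem.1.le, hcmem.2.le⟩, x₂, ⟨le_refl _, h23⟩, hc, e23 he23, hcmem.2⟩
        · -- x₁ < x₂ < x₃
          obtain ⟨c, hcmem, hc⟩ := exists_deriv_eq_zero hl12 (hcont.mono hsub1)
            (hz1.trans hz2.symm)
          obtain ⟨c', hc'mem, hc'⟩ := exists_deriv_eq_zero hl23 (hcont.mono hsub2)
            (hz2.trans hz3.symm)
          exact ⟨c, ⟨hcmem.1.le, hcmem.2.le⟩, c', ⟨hc'mem.1.le, hc'mem.2.le⟩, hc, hc',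
            hcmem.2.trans hc'mem.1⟩
    obtain ⟨c, hcmem, c', hc'mem, hc, hc', hcc'⟩ := hcc
    have hsubcc : Icc c c' ⊆ Icc x₁ x₃ :=
      Icc_subset_Icc (hcmem.1) (hc'mem.2)
    obtain ⟨e, hemem, he⟩ := exists_deriv_eq_zero hcc' ((hcont'.mono hsubcc))
      (hc.trans hc'.symm)
    refine ⟨c, hcmem, c', hc'mem, e, ⟨hcmem.1.trans hemem.1.le, hemem.2.le.trans hc'mem.2⟩, hc, hc', ?_⟩
    rw [hid2]
    exact he

end Stmt10

/-- `𝒩̃₊` is relatively closed in `Δ`: if `(γₙ, λₙ) ∈ 𝒩̃₊` converge to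
`(γ, λ) ∈ Δ`, then `(γ, λ) ∈ 𝒩̃₊`. -/
theorem stmt10 (q : ℕ → ℝ × ℝ) (hq : ∀ n, q n ∈ NtildePlus) (p : ℝ × ℝ)
    (hp : p ∈ Delta) (hlim : Tendsto q atTop (nhds p)) :
    p ∈ NtildePlus := by
  classical
  obtain ⟨hp1, hp2, hp12, -⟩ := hp
  have hγ : Tendsto (fun n => (q n).1) atTop (𝓝 p.1) := (continuous_fst.tendsto p).comp hlim
  have hlam : Tendsto (fun n => (q n).2) atTop (𝓝 p.2) := (continuous_snd.tendsto p).comp hlim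
  have H : ∀ n, ∃ a, memB a ∧ seriesFun a (q n).1 = 0 ∧ seriesFun a (q n).2 = 0 ∧
      hasZeros (seriesFun a) 3 (q n).2 := fun n => (hq n).2
  choose A hA1 hA2 hA3 hA4 using H
  have hq1pos : ∀ n, 0 < (q n).1 := fun n => (hq n).1.1
  have hq12 : ∀ n, (q n).1 < (q n).2 := fun n => (hq n).1.2.1
  have hq2lt : ∀ n, (q n).2 < 1 := fun n => (hq n).1.2.2.1
  choose X1 X2 X3 hX1m hX2m hX3m h12 h23 hz1 hz2 hz3 e12 e23 e13 using
    fun n => Stmt10.hasZeros_extract (hA4 n)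
  have hpbA : ∀ n, Stmt10.PB 1 0 (A n) := fun n => Stmt10.memB_pb (hA1 n)
  -- bounds on the zeros
  have hIoo : ∀ n, ∀ x ∈ Icc (X1 n) (X3 n), |x| < 1 := by
    intro n x hx
    rw [abs_lt]
    constructor
    · have := (hX1m n).1; linarith [hx.1]
    · have := (hX3m n).2; have := hq2lt n; linarith [hx.2]
  have hcontF : ∀ n, ContinuousOn (seriesFun (A n)) (Icc (X1 n) (X3 n)) := by
    intro n x hx
    exact ((Stmt10.hasDerivAt_seriesFun (hpbA n) zero_le_one
      (hIoo n x hx)).continuousAt).continuousWithinAt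
  have hcontF' : ∀ n, ContinuousOn (deriv (seriesFun (A n))) (Icc (X1 n) (X3 n)) := by
    intro n
    apply ContinuousOn.congr (f := fun x => seriesFun (Stmt10.sh (A n)) x)
    · intro x hx
      exact ((Stmt10.hasDerivAt_seriesFun ((hpbA n).sh' zero_le_one) (by positivity)
        (hIoo n x hx)).continuousAt).continuousWithinAt
    · intro x hx
      exact Stmt10.deriv_seriesFun (hpbA n) zero_le_one (hIoo n x hx)
  choose c hc c' hc' e he hdc hdc' hde using fun n =>
    Stmt10.rolle_triple (h12 n) (h23 n) (hcontF n) (hcontF' n)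
      (hz1 n) (hz2 n) (hz3 n) (e12 n) (e23 n) (e13 n)
  have hhalf1 : ∀ n, 1/2 ≤ X1 n := fun n =>
    Stmt10.half_le_of_zero (hA1 n) (hX1m n).1 (hz1 n)
  have hhalf2 : ∀ n, 1/2 ≤ X2 n := fun n =>
    Stmt10.half_le_of_zero (hA1 n) (hX2m n).1 (hz2 n)
  have hhalf3 : ∀ n, 1/2 ≤ X3 n := fun n =>
    Stmt10.half_le_of_zero (hA1 n) (hX3m n).1 (hz3 n)
  -- compactness of coefficients
  set T := ℕ → (Set.Icc (-1:ℝ) 1) with hT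
  have hmemIcc : ∀ n k, A n k ∈ Set.Icc (-1:ℝ) 1 := fun n k =>
    Set.mem_Icc.mpr (abs_le.mp (Stmt10.memB_abs_le (hA1 n) k))
  set u : ℕ → T := fun n k => ⟨A n k, hmemIcc n k⟩ with hu
  obtain ⟨L, φ0, hφ0, hL⟩ := SeqCompactSpace.tendsto_subseq u
  have hLk : ∀ k, Tendsto (fun n => A (φ0 n) k) atTop (𝓝 (L k : ℝ)) := by
    intro k
    have hco : Continuous fun T' : T => (T' k : ℝ) :=
      continuous_subtype_val.comp (continuous_apply k)
    exact (hco.tendsto L).comp hL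
  -- Bolzano–Weierstrass on the three zero sequences
  obtain ⟨y1, hy1mem, φ1, hφ1, hy1⟩ := (isCompact_Icc (a := (1/2:ℝ)) (b := 1)).tendsto_subseq
    (x := fun n => X1 (φ0 n)) (fun n => ⟨hhalf1 _, ((hX1m _).2.trans (hq2lt _).le)⟩)
  obtain ⟨y2, hy2mem, φ2, hφ2, hy2⟩ := (isCompact_Icc (a := (1/2:ℝ)) (b := 1)).tendsto_subseq
    (x := fun n => X2 (φ0 (φ1 n))) (fun n => ⟨hhalf2 _, ((hX2m _).2.trans (hq2lt _).le)⟩)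
  obtain ⟨y3, hy3mem, φ3, hφ3, hy3⟩ := (isCompact_Icc (a := (1/2:ℝ)) (b := 1)).tendsto_subseq
    (x := fun n => X3 (φ0 (φ1 (φ2 n)))) (fun n => ⟨hhalf3 _, ((hX3m _).2.trans (hq2lt _).le)⟩)
  set ψ : ℕ → ℕ := fun n => φ0 (φ1 (φ2 (φ3 n))) with hψ
  have hψmono : StrictMono ψ := hφ0.comp (hφ1.comp (hφ2.comp hφ3))
  have h23top : Tendsto (fun n => φ2 (φ3 n)) atTop atTop := (hφ2.comp hφ3).tendsto_atTop
  have h3top : Tendsto φ3 atTop atTop := hφ3.tendsto_atTop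
  have h123top : Tendsto (fun n => φ1 (φ2 (φ3 n))) atTop atTop :=
    (hφ1.comp (hφ2.comp hφ3)).tendsto_atTop
  -- limits along ψ
  have hy1' : Tendsto (fun n => X1 (ψ n)) atTop (𝓝 y1) := hy1.comp h23top
  have hy2' : Tendsto (fun n => X2 (ψ n)) atTop (𝓝 y2) := hy2.comp h3top
  have hy3' : Tendsto (fun n => X3 (ψ n)) atTop (𝓝 y3) := hy3
  have hγ' : Tendsto (fun n => (q (ψ n)).1) atTop (𝓝 p.1) := hγ.comp hψmono.tendsto_atTop
  have hlam' : Tendsto (fun n => (q (ψ n)).2) atTop (𝓝 p.2) := hlam.comp hψmono.tendsto_atTop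
  have hbc : ∀ k, Tendsto (fun n => A (ψ n) k) atTop (𝓝 (L k : ℝ)) := fun k =>
    (hLk k).comp h123top
  set a : ℕ → ℝ := fun k => (L k : ℝ) with ha
  -- memB a
  have hmemB : memB a := by
    constructor
    · have h1 : Tendsto (fun n => A (ψ n) 0) atTop (𝓝 (1:ℝ)) := by
        have : (fun n => A (ψ n) 0) = fun _ => (1:ℝ) := funext fun n => (hA1 (ψ n)).1
        rw [this]; exact tendsto_const_nhds
      exact tendsto_nhds_unique (hbc 0) h1
    · intro k hk
      have hcl : IsClosed ({-1, 0, 1} : Set ℝ) :=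
        (((Set.finite_singleton (1:ℝ)).insert 0).insert (-1)).isClosed
      have hmem : a k ∈ ({-1, 0, 1} : Set ℝ) := by
        apply hcl.mem_of_tendsto (hbc k)
        apply Eventually.of_forall
        intro n
        rcases (hA1 (ψ n)).2 k hk with h | h | h <;> simp [h]
      simpa using hmem
  -- ordering and position of limits
  have hy12 : y1 ≤ y2 := le_of_tendsto_of_tendsto' hy1' hy2' (fun n => h12 (ψ n))
  have hy23 : y2 ≤ y3 := le_of_tendsto_of_tendsto' hy2' hy3' (fun n => h23 (ψ n))
  have hy3le : y3 ≤ p.2 := le_of_tendsto_of_tendsto' hy3' hlam' (fun n => (hX3m (ψ n)).2)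
  have hy1pos : (0:ℝ) < y1 := lt_of_lt_of_le (by norm_num) hy1mem.1
  have habs1 : |y1| < 1 := by
    rw [abs_lt]; constructor
    · linarith
    · linarith [hp2.2, hy12.trans (hy23.trans hy3le)]
  have habs2 : |y2| < 1 := by
    rw [abs_lt]; constructor
    · linarith
    · linarith [hp2.2, hy23.trans hy3le]
  have habs3 : |y3| < 1 := by
    rw [abs_lt]; constructor
    · linarith
    · linarith [hp2.2]
  have habsp1 : |p.1| < 1 := by rw [abs_lt]; exact ⟨by linarith [hp1.1], hp1.2⟩
  have habsp2 : |p.2| < 1 := by rw [abs_lt]; exact ⟨by linarith [hp2.1], hp2.2⟩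
  have hpb : ∀ n, Stmt10.PB 1 0 (A (ψ n)) := fun n => hpbA (ψ n)
  -- zeros of the limit function
  have hfγ : seriesFun a p.1 = 0 :=
    Stmt10.seriesFun_eq_zero_of_lim zero_le_one hpb hbc hγ' habsp1 (fun n => hA2 (ψ n))
  have hflam : seriesFun a p.2 = 0 :=
    Stmt10.seriesFun_eq_zero_of_lim zero_le_one hpb hbc hlam' habsp2 (fun n => hA3 (ψ n))
  have hfy1 : seriesFun a y1 = 0 :=
    Stmt10.seriesFun_eq_zero_of_lim zero_le_one hpb hbc hy1' habs1 (fun n => hz1 (ψ n))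
  have hfy2 : seriesFun a y2 = 0 :=
    Stmt10.seriesFun_eq_zero_of_lim zero_le_one hpb hbc hy2' habs2 (fun n => hz2 (ψ n))
  have hfy3 : seriesFun a y3 = 0 :=
    Stmt10.seriesFun_eq_zero_of_lim zero_le_one hpb hbc hy3' habs3 (fun n => hz3 (ψ n))
  -- auxiliary bounds for points in [X1, X3]
  have hIccabs : ∀ n, ∀ x ∈ Icc (X1 (ψ n)) (X3 (ψ n)), |x| < 1 := fun n => hIoo (ψ n)
  have hpbsh : ∀ n, Stmt10.PB (1 * 2 ^ 0) 1 (Stmt10.sh (A (ψ n))) := fun n =>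
    (hpb n).sh' zero_le_one
  have hbcsh : ∀ k, Tendsto (fun n => Stmt10.sh (A (ψ n)) k) atTop
      (𝓝 (Stmt10.sh a k)) := by
    intro k
    exact (hbc (k+1)).const_mul _
  have hpbsh2 : ∀ n, Stmt10.PB (1 * 2 ^ 0 * 2 ^ 1) 2 (Stmt10.sh (Stmt10.sh (A (ψ n)))) :=
    fun n => (hpbsh n).sh' (by positivity)
  have hbcsh2 : ∀ k, Tendsto (fun n => Stmt10.sh (Stmt10.sh (A (ψ n))) k) atTop
      (𝓝 (Stmt10.sh (Stmt10.sh a) k)) := by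
    intro k
    exact (hbcsh (k+1)).const_mul _
  -- derivative conditions at the limit
  have he12 : y1 = y2 → deriv (seriesFun a) y1 = 0 := by
    intro heq
    have hcψ : Tendsto (fun n => c (ψ n)) atTop (𝓝 y1) :=
      tendsto_of_tendsto_of_tendsto_of_le_of_le hy1' (heq ▸ hy2')
        (fun n => (hc (ψ n)).1) (fun n => (hc (ψ n)).2)
    have hzn : ∀ n, seriesFun (Stmt10.sh (A (ψ n))) (c (ψ n)) = 0 := by
      intro n
      have hmemc : c (ψ n) ∈ Icc (X1 (ψ n)) (X3 (ψ n)) :=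
        ⟨(hc (ψ n)).1, (hc (ψ n)).2.trans (h23 (ψ n))⟩
      rw [← Stmt10.deriv_seriesFun (hpb n) zero_le_one (hIccabs n _ hmemc)]
      exact hdc (ψ n)
    have hlim0 : seriesFun (Stmt10.sh a) y1 = 0 :=
      Stmt10.seriesFun_eq_zero_of_lim (by positivity) hpbsh hbcsh hcψ habs1 hzn
    rw [Stmt10.deriv_seriesFun (fun k => le_of_tendsto ((hbc k).abs)
      (Eventually.of_forall fun n => hpb n k)) zero_le_one habs1]
    exact hlim0
  have he23 : y2 = y3 → deriv (seriesFun a) y2 = 0 := by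
    intro heq
    have hcψ : Tendsto (fun n => c' (ψ n)) atTop (𝓝 y2) := by
      apply tendsto_of_tendsto_of_tendsto_of_le_of_le hy2' ?_
        (fun n => (hc' (ψ n)).1) (fun n => (hc' (ψ n)).2)
      rw [heq]; exact hy3'
    have hzn : ∀ n, seriesFun (Stmt10.sh (A (ψ n))) (c' (ψ n)) = 0 := by
      intro n
      have hmemc : c' (ψ n) ∈ Icc (X1 (ψ n)) (X3 (ψ n)) :=
        ⟨(h12 (ψ n)).trans (hc' (ψ n)).1, (hc' (ψ n)).2⟩
      rw [← Stmt10.deriv_seriesFun (hpb n) zero_le_one (hIccabs n _ hmemc)]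
      exact hdc' (ψ n)
    have hlim0 : seriesFun (Stmt10.sh a) y2 = 0 :=
      Stmt10.seriesFun_eq_zero_of_lim (by positivity) hpbsh hbcsh hcψ habs2 hzn
    rw [Stmt10.deriv_seriesFun (fun k => le_of_tendsto ((hbc k).abs)
      (Eventually.of_forall fun n => hpb n k)) zero_le_one habs2]
    exact hlim0
  have he13 : y1 = y3 → iteratedDeriv 2 (seriesFun a) y1 = 0 := by
    intro heq
    have heψ : Tendsto (fun n => e (ψ n)) atTop (𝓝 y1) :=
      tendsto_of_tendsto_of_tendsto_of_le_of_le hy1' (heq ▸ hy3')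
        (fun n => (he (ψ n)).1) (fun n => (he (ψ n)).2)
    have hzn : ∀ n, seriesFun (Stmt10.sh (Stmt10.sh (A (ψ n)))) (e (ψ n)) = 0 := by
      intro n
      rw [← Stmt10.iteratedDeriv_two_seriesFun (hpb n) zero_le_one (hIccabs n _ (he (ψ n)))]
      exact hde (ψ n)
    have hlim0 : seriesFun (Stmt10.sh (Stmt10.sh a)) y1 = 0 :=
      Stmt10.seriesFun_eq_zero_of_lim (by positivity) hpbsh2 hbcsh2 heψ habs1 hzn
    rw [Stmt10.iteratedDeriv_two_seriesFun (fun k => le_of_tendsto ((hbc k).abs)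
      (Eventually.of_forall fun n => hpb n k)) zero_le_one habs1]
    exact hlim0
  -- assemble
  have hy1mem' : y1 ∈ Ioc (0:ℝ) p.2 := ⟨hy1pos, hy12.trans (hy23.trans hy3le)⟩
  have hy3mem' : y3 ∈ Ioc (0:ℝ) p.2 := ⟨lt_of_lt_of_le hy1pos (hy12.trans hy23), hy3le⟩
  have hzeros : hasZeros (seriesFun a) 3 p.2 :=
    Stmt10.hasZeros_of_triple hy1mem' hy3mem' hy12 hy23 hfy1 hfy2 hfy3 he12 he23 he13
  exact ⟨⟨hp1.1, hp12, hp2.2, a, hmemB, hfγ, hflam⟩, a, hmemB, hfγ, hflam, hzeros⟩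
end
end

section
/- Let λ ∈ (0,1). Suppose there are sequences γₙ, λₙ ∈ (0,1) with γₙ < λₙ for all n, γₙ → λ and λₙ → λ, and functions fₙ ∈ ℬ with fₙ(γₙ) = fₙ(λₙ) = 0. Then there exists f ∈ ℬ with a double zero at λ, i.e. f(λ) = f′(λ) = 0. -/
open Set Filter Topology

noncomputable section

-- Auxiliary lemmas
lemma sumT1 {r : ℝ} (h0 : 0 ≤ r) (h1 : r < 1) : Summable (fun k : ℕ => r ^ k) :=
  summable_geometric_of_lt_one h0 h1

lemma sumT2 {r : ℝ} (h0 : 0 ≤ r) (h1 : r < 1) :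
    Summable (fun k : ℕ => (k : ℝ) * r ^ (k - 1)) := by
  rw [← summable_nat_add_iff 1]
  have hr : ‖r‖ < 1 := by rwa [Real.norm_eq_abs, abs_of_nonneg h0]
  have h := (summable_pow_mul_geometric_of_norm_lt_one 1 hr).add
    (summable_geometric_of_lt_one h0 h1)
  refine h.congr fun k => ?_
  have e1 : k + 1 - 1 = k := rfl
  rw [e1]
  push_cast
  ring

lemma sumT3 {r : ℝ} (h0 : 0 ≤ r) (h1 : r < 1) :
    Summable (fun k : ℕ => (k : ℝ) * (((k - 1 : ℕ) : ℝ) * r ^ (k - 1 - 1))) := by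
  rw [← summable_nat_add_iff 2]
  have hr : ‖r‖ < 1 := by rwa [Real.norm_eq_abs, abs_of_nonneg h0]
  have h := ((summable_pow_mul_geometric_of_norm_lt_one 2 hr).add
    ((summable_pow_mul_geometric_of_norm_lt_one 1 hr).mul_left 3)).add
    ((summable_geometric_of_lt_one h0 h1).mul_left 2)
  refine h.congr fun k => ?_
  rw [show k + 2 - 1 = k + 1 from rfl, show k + 1 - 1 = k from rfl]
  push_cast
  ring

lemma summable_series {a : ℕ → ℝ} (ha : ∀ k, |a k| ≤ 1) {x r : ℝ} (hx : |x| ≤ r) (h1 : r < 1) :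
    Summable (fun k => a k * x ^ k) := by
  have h0 : 0 ≤ r := (abs_nonneg x).trans hx
  refine Summable.of_norm_bounded (sumT1 h0 h1) fun k => ?_
  rw [Real.norm_eq_abs, abs_mul, abs_pow]
  calc |a k| * |x| ^ k ≤ 1 * r ^ k := by
        apply mul_le_mul (ha k) (pow_le_pow_left₀ (abs_nonneg x) hx k) (by positivity) one_pos.le
    _ = r ^ k := one_mul _

lemma summable_dseries {a : ℕ → ℝ} (ha : ∀ k, |a k| ≤ 1) {x r : ℝ} (hx : |x| ≤ r) (h1 : r < 1) :
    Summable (fun k => a k * ((k : ℝ) * x ^ (k - 1))) := by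
  have h0 : 0 ≤ r := (abs_nonneg x).trans hx
  refine Summable.of_norm_bounded (sumT2 h0 h1) fun k => ?_
  rw [Real.norm_eq_abs, abs_mul, abs_mul, abs_pow, Nat.abs_cast]
  calc |a k| * ((k : ℝ) * |x| ^ (k - 1)) ≤ 1 * ((k : ℝ) * r ^ (k - 1)) := by
        apply mul_le_mul (ha k) ?_ (by positivity) one_pos.le
        exact mul_le_mul_of_nonneg_left (pow_le_pow_left₀ (abs_nonneg x) hx _) (Nat.cast_nonneg k)
    _ = (k : ℝ) * r ^ (k - 1) := one_mul _

lemma hasDerivAt_seriesFun {a : ℕ → ℝ} (ha : ∀ k, |a k| ≤ 1) {x : ℝ} (hx : |x| < 1) :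
    HasDerivAt (seriesFun a) (∑' k, a k * ((k : ℝ) * x ^ (k - 1))) x := by
  set r : ℝ := (|x| + 1) / 2 with hrdef
  have hxr : |x| < r := by rw [hrdef]; linarith
  have hr0 : 0 ≤ r := (abs_nonneg x).trans hxr.le
  have hr1 : r < 1 := by rw [hrdef]; linarith
  have hx' : x ∈ Ioo (-r) r := by
    rw [mem_Ioo, ← abs_lt]; exact hxr
  have H : HasDerivAt (fun z => ∑' n, a n * z ^ n) (∑' k, a k * ((k : ℝ) * x ^ (k - 1))) x := by
    refine hasDerivAt_tsum_of_isPreconnected (sumT2 hr0 hr1) isOpen_Ioo isPreconnected_Ioo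
      (g := fun n y => a n * y ^ n) (g' := fun n y => a n * ((n : ℝ) * y ^ (n - 1)))
      (fun n y _ => (hasDerivAt_pow n y).const_mul (a n)) (fun n y hy => ?_) hx'
      (summable_series ha hxr.le hr1) hx'
    have hy' : |y| ≤ r := (abs_lt.2 ⟨hy.1, hy.2⟩).le
    rw [Real.norm_eq_abs, abs_mul, abs_mul, abs_pow, Nat.abs_cast]
    calc |a n| * ((n : ℝ) * |y| ^ (n - 1)) ≤ 1 * ((n : ℝ) * r ^ (n - 1)) := by
          apply mul_le_mul (ha n) ?_ (by positivity) one_pos.le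
          exact mul_le_mul_of_nonneg_left (pow_le_pow_left₀ (abs_nonneg y) hy' _) (Nat.cast_nonneg n)
      _ = (n : ℝ) * r ^ (n - 1) := one_mul _
  exact H

lemma deriv_seriesFun {a : ℕ → ℝ} (ha : ∀ k, |a k| ≤ 1) {x : ℝ} (hx : |x| < 1) :
    deriv (seriesFun a) x = ∑' k, a k * ((k : ℝ) * x ^ (k - 1)) :=
  (hasDerivAt_seriesFun ha hx).deriv

lemma contAt_dseries {a : ℕ → ℝ} (ha : ∀ k, |a k| ≤ 1) {x : ℝ} (hx : |x| < 1) :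
    ContinuousAt (fun z => ∑' k, a k * ((k : ℝ) * z ^ (k - 1))) x := by
  set r : ℝ := (|x| + 1) / 2 with hrdef
  have hxr : |x| < r := by rw [hrdef]; linarith
  have hr0 : 0 ≤ r := (abs_nonneg x).trans hxr.le
  have hr1 : r < 1 := by rw [hrdef]; linarith
  have hx' : x ∈ Ioo (-r) r := by
    rw [mem_Ioo, ← abs_lt]; exact hxr
  have H : HasDerivAt (fun z => ∑' k, a k * ((k : ℝ) * z ^ (k - 1)))
      (∑' k, a k * ((k : ℝ) * (((k - 1 : ℕ) : ℝ) * x ^ (k - 1 - 1)))) x := by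
    refine hasDerivAt_tsum_of_isPreconnected (sumT3 hr0 hr1) isOpen_Ioo isPreconnected_Ioo
      (g := fun n y => a n * ((n : ℝ) * y ^ (n - 1)))
      (g' := fun n y => a n * ((n : ℝ) * (((n - 1 : ℕ) : ℝ) * y ^ (n - 1 - 1))))
      (fun n y _ => (((hasDerivAt_pow (n - 1) y).const_mul ((n : ℝ))).const_mul (a n)))
      (fun n y hy => ?_) hx' (summable_dseries ha hxr.le hr1) hx'
    have hy' : |y| ≤ r := (abs_lt.2 ⟨hy.1, hy.2⟩).le
    rw [Real.norm_eq_abs, abs_mul, abs_mul, abs_mul, abs_pow, Nat.abs_cast, Nat.abs_cast]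
    calc |a n| * ((n : ℝ) * (((n - 1 : ℕ) : ℝ) * |y| ^ (n - 1 - 1)))
        ≤ 1 * ((n : ℝ) * (((n - 1 : ℕ) : ℝ) * r ^ (n - 1 - 1))) := by
          apply mul_le_mul (ha n) ?_ (by positivity) one_pos.le
          apply mul_le_mul_of_nonneg_left ?_ (Nat.cast_nonneg n)
          exact mul_le_mul_of_nonneg_left (pow_le_pow_left₀ (abs_nonneg y) hy' _) (Nat.cast_nonneg _)
      _ = (n : ℝ) * (((n - 1 : ℕ) : ℝ) * r ^ (n - 1 - 1)) := one_mul _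
  exact H.continuousAt

lemma key_tendsto {T : ℕ → ℝ} (hT : Summable T) {c : ℕ → ℕ → ℝ} {d : ℕ → ℝ}
    (hc1 : ∀ n k, |c n k| ≤ 1) (hd1 : ∀ k, |d k| ≤ 1)
    (hck : ∀ k, Tendsto (fun n => c n k) atTop (𝓝 (d k)))
    {v : ℕ → ℕ → ℝ} (hv : ∀ᶠ n in atTop, ∀ k, |v n k| ≤ T k)
    (hzero : ∀ᶠ n in atTop, (∑' k, c n k * v n k) = 0) :
    Tendsto (fun n => ∑' k, d k * v n k) atTop (𝓝 0) := by
  have main : Tendsto (fun n => ∑' k, (d k - c n k) * v n k) atTop (𝓝 0) := by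
    have h := tendsto_tsum_of_dominated_convergence
      (f := fun n k => (d k - c n k) * v n k) (g := fun _ => (0 : ℝ))
      (bound := fun k => 2 * T k) (𝓕 := atTop) (hT.mul_left 2) ?_ ?_
    · simpa using h
    · intro k
      apply squeeze_zero_norm' (a := fun n => |d k - c n k| * T k)
      · filter_upwards [hv] with n hn
        rw [Real.norm_eq_abs, abs_mul]
        exact mul_le_mul_of_nonneg_left (hn k) (abs_nonneg _)
      · have h0 : Tendsto (fun n => d k - c n k) atTop (𝓝 0) := by
          simpa using (tendsto_const_nhds (x := d k)).sub (hck k)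
        simpa using h0.abs.mul_const (T k)
    · filter_upwards [hv] with n hn k
      rw [Real.norm_eq_abs, abs_mul]
      have h1 : |d k - c n k| ≤ 2 := by
        calc |d k - c n k| ≤ |d k| + |c n k| := abs_sub _ _
          _ ≤ 1 + 1 := add_le_add (hd1 k) (hc1 n k)
          _ = 2 := by norm_num
      have hT0 : 0 ≤ T k := (abs_nonneg _).trans (hn k)
      exact mul_le_mul h1 (hn k) (abs_nonneg _) (by norm_num)
  refine main.congr' ?_
  filter_upwards [hv, hzero] with n hn hz
  have hs1 : Summable (fun k => c n k * v n k) := by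
    refine Summable.of_norm_bounded hT fun k => ?_
    rw [Real.norm_eq_abs, abs_mul]
    calc |c n k| * |v n k| ≤ 1 * T k :=
          mul_le_mul (hc1 n k) (hn k) (abs_nonneg _) one_pos.le
      _ = T k := one_mul _
  have hs2 : Summable (fun k => d k * v n k) := by
    refine Summable.of_norm_bounded hT fun k => ?_
    rw [Real.norm_eq_abs, abs_mul]
    calc |d k| * |v n k| ≤ 1 * T k :=
          mul_le_mul (hd1 k) (hn k) (abs_nonneg _) one_pos.le
      _ = T k := one_mul _
  calc (∑' k, (d k - c n k) * v n k) = ∑' k, (d k * v n k - c n k * v n k) := by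
        simp only [sub_mul]
    _ = (∑' k, d k * v n k) - ∑' k, c n k * v n k := Summable.tsum_sub hs2 hs1
    _ = ∑' k, d k * v n k := by rw [hz, sub_zero]

lemma memB_abs_le {b : ℕ → ℝ} (h : memB b) (k : ℕ) : |b k| ≤ 1 := by
  rcases Nat.eq_zero_or_pos k with hk | hk
  · rw [hk, h.1]; norm_num
  · rcases h.2 k hk with h' | h' | h' <;> rw [h'] <;> norm_num

/-- If `fₙ ∈ ℬ` have zeros `γₙ < λₙ` in `(0,1)` with `γₙ → λ` and
`λₙ → λ ∈ (0,1)`, then some `f ∈ ℬ` has a double zero at `λ`. -/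
theorem stmt18 (lam : ℝ) (hlam : lam ∈ Set.Ioo (0 : ℝ) 1) (γs lams : ℕ → ℝ)
    (hmem : ∀ n, γs n ∈ Set.Ioo (0 : ℝ) 1 ∧ lams n ∈ Set.Ioo (0 : ℝ) 1)
    (hlt : ∀ n, γs n < lams n)
    (hγlim : Tendsto γs atTop (nhds lam)) (hlamlim : Tendsto lams atTop (nhds lam))
    (f : ℕ → ℕ → ℝ) (hf : ∀ n, memB (f n))
    (hz : ∀ n, seriesFun (f n) (γs n) = 0 ∧ seriesFun (f n) (lams n) = 0) :
    ∃ a : ℕ → ℝ, memB a ∧ seriesFun a lam = 0 ∧ deriv (seriesFun a) lam = 0 := by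
  -- compactness of the coefficient space
  set S : Set (ℕ → ℝ) := Set.univ.pi (fun i => if i = 0 then ({1} : Set ℝ) else {-1, 0, 1})
    with hSdef
  have hScomp : IsCompact S := isCompact_univ_pi fun i => by
    split
    · exact isCompact_singleton
    · exact (Set.toFinite ({-1, 0, 1} : Set ℝ)).isCompact
  have hfS : ∀ n, f n ∈ S := by
    intro n
    rw [hSdef, Set.mem_univ_pi]
    intro i
    rcases Nat.eq_zero_or_pos i with h | h
    · simp [h, (hf n).1]
    · rw [if_neg (by omega)]
      rcases (hf n).2 i h with h' | h' | h' <;> simp [h']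
  obtain ⟨a, haS, φ, hφ, hconv⟩ := hScomp.tendsto_subseq hfS
  have hφat : Tendsto φ atTop atTop := hφ.tendsto_atTop
  have hck : ∀ k, Tendsto (fun n => f (φ n) k) atTop (𝓝 (a k)) := fun k =>
    (tendsto_pi_nhds.1 hconv) k
  have hamem : memB a := by
    rw [hSdef, Set.mem_univ_pi] at haS
    constructor
    · have := haS 0; simpa using this
    · intro k hk
      have := haS k
      rw [if_neg (by omega)] at this
      simpa using this
  have ha1 : ∀ k, |a k| ≤ 1 := memB_abs_le hamem
  have hc1 : ∀ n k, |f (φ n) k| ≤ 1 := fun n k => memB_abs_le (hf (φ n)) k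
  -- the radius r
  set r : ℝ := (1 + lam) / 2 with hrdef
  have hlamr : lam < r := by rw [hrdef]; linarith [hlam.2]
  have hr1 : r < 1 := by rw [hrdef]; linarith [hlam.2]
  have hr0 : 0 ≤ r := by rw [hrdef]; linarith [hlam.1]
  have hlam1 : |lam| < 1 := abs_lt.2 ⟨by linarith [hlam.1], hlam.2⟩
  have hγφ : Tendsto (fun n => γs (φ n)) atTop (𝓝 lam) := hγlim.comp hφat
  have hlφ : Tendsto (fun n => lams (φ n)) atTop (𝓝 lam) := hlamlim.comp hφat
  -- value zero at lam
  have hev_l : ∀ᶠ n in atTop, ∀ k, |(lams (φ n)) ^ k| ≤ r ^ k := by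
    filter_upwards [hlφ.eventually_lt_const hlamr] with n hn k
    rw [abs_pow]
    refine pow_le_pow_left₀ (abs_nonneg _) ?_ k
    rw [abs_of_nonneg (hmem (φ n)).2.1.le]
    exact hn.le
  have hFz : Tendsto (fun n => ∑' k, a k * (lams (φ n)) ^ k) atTop (𝓝 0) := by
    refine key_tendsto (sumT1 hr0 hr1) hc1 ha1 hck hev_l ?_
    exact Eventually.of_forall fun n => (hz (φ n)).2
  have hFcont : ContinuousAt (seriesFun a) lam := (hasDerivAt_seriesFun ha1 hlam1).continuousAt
  have hFlim : Tendsto (fun n => ∑' k, a k * (lams (φ n)) ^ k) atTop (𝓝 (seriesFun a lam)) :=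
    hFcont.tendsto.comp hlφ
  have hF0 : seriesFun a lam = 0 := tendsto_nhds_unique hFlim hFz
  -- Rolle points
  have hRolle : ∀ n, ∃ c ∈ Ioo (γs n) (lams n), deriv (seriesFun (f n)) c = 0 := by
    intro n
    refine exists_deriv_eq_zero (hlt n) ?_ ((hz n).1.trans (hz n).2.symm)
    intro x hx
    have hx1 : |x| < 1 := by
      rw [abs_lt]
      constructor
      · linarith [(hmem n).1.1, hx.1]
      · have := (hmem n).2.2
        linarith [hx.2]
    exact (hasDerivAt_seriesFun (memB_abs_le (hf n)) hx1).continuousAt.continuousWithinAt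
  choose μ hμI hμ0 using hRolle
  have hμφ : Tendsto (fun n => μ (φ n)) atTop (𝓝 lam) :=
    tendsto_of_tendsto_of_tendsto_of_le_of_le hγφ hlφ
      (fun n => (hμI (φ n)).1.le) (fun n => (hμI (φ n)).2.le)
  have hμ01 : ∀ n, μ n ∈ Ioo (0 : ℝ) 1 := fun n =>
    ⟨(hmem n).1.1.trans (hμI n).1, (hμI n).2.trans (hmem n).2.2⟩
  have hev_μ : ∀ᶠ n in atTop, ∀ k : ℕ, |(k : ℝ) * (μ (φ n)) ^ (k - 1)| ≤ (k : ℝ) * r ^ (k - 1) := by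
    filter_upwards [hμφ.eventually_lt_const hlamr] with n hn k
    rw [abs_mul, Nat.abs_cast, abs_pow]
    refine mul_le_mul_of_nonneg_left ?_ (Nat.cast_nonneg k)
    refine pow_le_pow_left₀ (abs_nonneg _) ?_ _
    rw [abs_of_nonneg (hμ01 (φ n)).1.le]
    exact hn.le
  have hGz : Tendsto (fun n => ∑' k, a k * ((k : ℝ) * (μ (φ n)) ^ (k - 1))) atTop (𝓝 0) := by
    refine key_tendsto (sumT2 hr0 hr1) hc1 ha1 hck hev_μ ?_
    refine Eventually.of_forall fun n => ?_
    have h1 : |μ (φ n)| < 1 :=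
      abs_lt.2 ⟨by linarith [(hμ01 (φ n)).1], (hμ01 (φ n)).2⟩
    rw [← deriv_seriesFun (memB_abs_le (hf (φ n))) h1]
    exact hμ0 (φ n)
  have hGcont : ContinuousAt (fun z => ∑' k, a k * ((k : ℝ) * z ^ (k - 1))) lam :=
    contAt_dseries ha1 hlam1
  have hGlim : Tendsto (fun n => ∑' k, a k * ((k : ℝ) * (μ (φ n)) ^ (k - 1))) atTop
      (𝓝 (∑' k, a k * ((k : ℝ) * lam ^ (k - 1)))) := hGcont.tendsto.comp hμφ
  have hG0 : (∑' k, a k * ((k : ℝ) * lam ^ (k - 1))) = 0 := tendsto_nhds_unique hGlim hGz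
  exact ⟨a, hamem, hF0, by rw [deriv_seriesFun ha1 hlam1]; exact hG0⟩
end
end

section
/- Let λ ∈ (0, 2^{−1/2}) and let f ∈ ℬ satisfy f(λ) = f′(λ) = 0, with infinitely many of the coefficients of f different from −1. Then (λ, λ) lies in the closure of 𝒩₊: for every ε > 0 there exist g ∈ ℬ and real numbers γ′, λ′ with λ − ε < γ′ < λ′ < λ + ε, 0 < γ′ < λ′ < 1, and g(γ′) = g(λ′) = 0. -/
open Set Filter Topology

noncomputable section

namespace Stmt19Aux

lemma summable_aux {b : ℕ → ℝ} (hb : ∀ n, |b n| ≤ 1) {t : ℝ} (ht : |t| < 1) (k : ℕ) :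
    Summable (fun n : ℕ => (n : ℝ) ^ k * (b n * t ^ n)) := by
  apply Summable.of_norm_bounded
    (summable_pow_mul_geometric_of_norm_lt_one (r := |t|) k (by rwa [Real.norm_eq_abs, abs_abs]))
  intro n
  rw [Real.norm_eq_abs, abs_mul, abs_mul, abs_pow, abs_pow, Nat.abs_cast]
  have h1 := hb n
  have h2 : (0:ℝ) ≤ |t| ^ n := pow_nonneg (abs_nonneg t) n
  have h3 : (0:ℝ) ≤ (n:ℝ) ^ k := by positivity
  have h4 : (0:ℝ) ≤ |b n| := abs_nonneg _
  nlinarith [mul_nonneg (by linarith : (0:ℝ) ≤ 1 - |b n|) (mul_nonneg h3 h2)]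

lemma tsum_sq_geometric {t : ℝ} (h0 : 0 ≤ t) (h1 : t < 1) :
    ∑' n : ℕ, (n : ℝ) ^ 2 * t ^ n = t * (1 + t) / (1 - t) ^ 3 := by
  have hn : ‖t‖ < 1 := by rwa [Real.norm_eq_abs, abs_of_nonneg h0]
  have hs2 : Summable (fun n : ℕ => (n : ℝ) ^ 2 * t ^ n) :=
    summable_pow_mul_geometric_of_norm_lt_one 2 hn
  have hs1 : Summable (fun n : ℕ => (n : ℝ) * t ^ n) := by
    have := summable_pow_mul_geometric_of_norm_lt_one (r := t) 1 hn
    simpa using this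
  have hs0 : Summable (fun n : ℕ => t ^ n) := summable_geometric_of_lt_one h0 h1
  have ht1 : (1:ℝ) - t ≠ 0 := by intro h; nlinarith
  set S := ∑' n : ℕ, (n : ℝ) ^ 2 * t ^ n with hS
  have e1 : S = ∑' n : ℕ, ((n:ℝ) + 1) ^ 2 * t ^ (n + 1) := by
    rw [hS, Summable.tsum_eq_zero_add hs2]
    push_cast
    simp
  have e2 : t * S = ∑' n : ℕ, (n:ℝ) ^ 2 * t ^ (n + 1) := by
    rw [hS, ← tsum_mul_left]
    exact tsum_congr fun n => by ring
  have hs2' : Summable (fun n : ℕ => ((n:ℝ) + 1) ^ 2 * t ^ (n + 1)) := by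
    apply (summable_nat_add_iff 1).2 at hs2
    exact hs2.congr fun n => by push_cast; ring
  have hs2'' : Summable (fun n : ℕ => (n:ℝ) ^ 2 * t ^ (n + 1)) := by
    exact (hs2.mul_left t).congr fun n => by ring
  have e3 : S - t * S = ∑' n : ℕ, (2 * (n:ℝ) + 1) * t ^ (n + 1) := by
    rw [e2, e1, ← Summable.tsum_sub hs2' hs2'']
    exact tsum_congr fun n => by ring
  have e4 : ∑' n : ℕ, (2 * (n:ℝ) + 1) * t ^ (n + 1)
      = 2 * t * (t / (1 - t) ^ 2) + t * (1 - t)⁻¹ := by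
    rw [← tsum_coe_mul_geometric_of_norm_lt_one hn, ← tsum_geometric_of_lt_one h0 h1,
      ← tsum_mul_left, ← tsum_mul_left, ← Summable.tsum_add (hs1.mul_left _) (hs0.mul_left _)]
    exact tsum_congr fun n => by push_cast; ring
  have := e3.trans e4
  field_simp at this ⊢
  nlinarith [this]


lemma hasDerivAt_seriesFun {b : ℕ → ℝ} (hb : ∀ n, |b n| ≤ 1) {x : ℝ} (hx : |x| < 1) :
    HasDerivAt (seriesFun b) (∑' n : ℕ, (n : ℝ) * b n * x ^ (n - 1)) x := by
  set r : ℝ := (|x| + 1) / 2 with hrdef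
  have hxa : 0 ≤ |x| := abs_nonneg x
  have hr0 : 0 < r := by rw [hrdef]; positivity
  have hxr : |x| < r := by rw [hrdef]; linarith
  have hr1 : r < 1 := by rw [hrdef]; linarith
  have hrn : ‖r‖ < 1 := by rwa [Real.norm_eq_abs, abs_of_pos hr0]
  have hmem : x ∈ Ioo (-r) r := by
    have := abs_lt.1 hxr; exact ⟨this.1, this.2⟩
  have hmem0 : (0:ℝ) ∈ Ioo (-r) r := ⟨by linarith, hr0⟩
  have hu : Summable (fun n : ℕ => (n : ℝ) * r ^ (n - 1)) := by
    apply (summable_nat_add_iff 1).1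
    have h1 := summable_pow_mul_geometric_of_norm_lt_one (R := ℝ) (r := r) 1 hrn
    have h0 : Summable (fun n : ℕ => r ^ n) := summable_geometric_of_lt_one hr0.le hr1
    exact (h1.add h0).congr (fun n => by push_cast [Nat.add_sub_cancel]; ring)
  exact hasDerivAt_tsum_of_isPreconnected hu isOpen_Ioo (convex_Ioo (-r) r).isPreconnected
    (g := fun (n : ℕ) (y : ℝ) => b n * y ^ n)
    (g' := fun (n : ℕ) (y : ℝ) => (n : ℝ) * b n * y ^ (n - 1))
    (fun n y _ => by
      show HasDerivAt (fun z : ℝ => b n * z ^ n) ((n : ℝ) * b n * y ^ (n - 1)) y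
      have h := (hasDerivAt_pow n y).const_mul (b n)
      refine h.congr_deriv ?_
      ring)
    (fun n y hy => by
      have hy' : |y| ≤ r := le_of_lt (abs_lt.2 ⟨hy.1, hy.2⟩)
      have h1 : (n:ℝ) * |b n| ≤ (n:ℝ) * 1 := mul_le_mul_of_nonneg_left (hb n) (Nat.cast_nonneg n)
      have hpow : |y| ^ (n-1) ≤ r ^ (n-1) := pow_le_pow_left₀ (abs_nonneg y) hy' _
      calc ‖(n : ℝ) * b n * y ^ (n - 1)‖
          = (n : ℝ) * |b n| * |y| ^ (n - 1) := by
            rw [Real.norm_eq_abs, abs_mul, abs_mul, abs_pow, Nat.abs_cast]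
        _ ≤ (n : ℝ) * 1 * r ^ (n - 1) :=
            mul_le_mul h1 hpow (by positivity) (by positivity)
        _ = (n : ℝ) * r ^ (n - 1) := by ring)
    hmem0
    (by
      apply summable_of_ne_finset_zero (s := ({0} : Finset ℕ))
      intro n hn
      simp only [Finset.mem_singleton] at hn
      simp [zero_pow hn])
    hmem

lemma hasDerivAt_derivSeries {b : ℕ → ℝ} (hb : ∀ n, |b n| ≤ 1) {x : ℝ} (hx : |x| < 1) :
    HasDerivAt (fun y : ℝ => ∑' n : ℕ, (n : ℝ) * b n * y ^ (n - 1))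
      (∑' n : ℕ, (n : ℝ) * ((n : ℝ) - 1) * b n * x ^ (n - 2)) x := by
  set r : ℝ := (|x| + 1) / 2 with hrdef
  have hxa : 0 ≤ |x| := abs_nonneg x
  have hr0 : 0 < r := by rw [hrdef]; positivity
  have hxr : |x| < r := by rw [hrdef]; linarith
  have hr1 : r < 1 := by rw [hrdef]; linarith
  have hrn : ‖r‖ < 1 := by rwa [Real.norm_eq_abs, abs_of_pos hr0]
  have hmem : x ∈ Ioo (-r) r := by
    have := abs_lt.1 hxr; exact ⟨this.1, this.2⟩
  have hmem0 : (0:ℝ) ∈ Ioo (-r) r := ⟨by linarith, hr0⟩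
  have hu : Summable (fun n : ℕ => (n : ℝ) ^ 2 * r ^ (n - 2)) := by
    apply (summable_nat_add_iff 2).1
    have h2 := summable_pow_mul_geometric_of_norm_lt_one (R := ℝ) (r := r) 2 hrn
    have h1 := summable_pow_mul_geometric_of_norm_lt_one (R := ℝ) (r := r) 1 hrn
    have h0 : Summable (fun n : ℕ => r ^ n) := summable_geometric_of_lt_one hr0.le hr1
    exact ((h2.add (h1.mul_left 4)).add (h0.mul_left 4)).congr
      (fun n => by push_cast [Nat.add_sub_cancel]; ring)
  exact hasDerivAt_tsum_of_isPreconnected hu isOpen_Ioo (convex_Ioo (-r) r).isPreconnected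
    (g := fun (n : ℕ) (y : ℝ) => (n : ℝ) * b n * y ^ (n - 1))
    (g' := fun (n : ℕ) (y : ℝ) => (n : ℝ) * ((n : ℝ) - 1) * b n * y ^ (n - 2))
    (fun n y _ => by
      show HasDerivAt (fun z : ℝ => (n : ℝ) * b n * z ^ (n - 1))
        ((n : ℝ) * ((n : ℝ) - 1) * b n * y ^ (n - 2)) y
      have h := (hasDerivAt_pow (n-1) y).const_mul ((n:ℝ) * b n)
      have e : (n:ℝ) * ((n:ℝ) - 1) * b n * y ^ (n-2)
          = (n:ℝ) * b n * (((n-1 : ℕ):ℝ) * y ^ (n-1-1)) := by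
        match n with
        | 0 => norm_num
        | 1 => norm_num
        | (m+2) =>
          push_cast [show m+2-1 = m+1 from rfl, show m+2-2 = m from rfl,
            show m+1-1 = m from rfl]
          ring
      rw [e]; exact h)
    (fun n y hy => by
      show ‖(n : ℝ) * ((n : ℝ) - 1) * b n * y ^ (n - 2)‖ ≤ (n : ℝ) ^ 2 * r ^ (n - 2)
      have hy' : |y| ≤ r := le_of_lt (abs_lt.2 ⟨hy.1, hy.2⟩)
      match n with
      | 0 => simp
      | (m+1) =>
        have hc0 : (0:ℝ) ≤ ((m+1 : ℕ) : ℝ) - 1 := by push_cast; linarith [Nat.cast_nonneg (α := ℝ) m]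
        have hc1 : ((m+1 : ℕ) : ℝ) - 1 ≤ ((m+1 : ℕ) : ℝ) := by linarith
        have hpow : |y| ^ ((m+1)-2) ≤ r ^ ((m+1)-2) := pow_le_pow_left₀ (abs_nonneg y) hy' _
        have h1 : ((m+1 : ℕ):ℝ) * |((m+1 : ℕ):ℝ) - 1| * |b (m+1)|
            ≤ ((m+1 : ℕ):ℝ) * ((m+1 : ℕ):ℝ) * 1 := by
          rw [abs_of_nonneg hc0]
          have := hb (m+1)
          have h0 : (0:ℝ) ≤ ((m+1 : ℕ):ℝ) := Nat.cast_nonneg _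
          have h4 : (0:ℝ) ≤ |b (m+1)| := abs_nonneg _
          nlinarith
        calc ‖((m+1 : ℕ) : ℝ) * (((m+1 : ℕ) : ℝ) - 1) * b (m+1) * y ^ ((m+1) - 2)‖
            = ((m+1 : ℕ) : ℝ) * |((m+1 : ℕ) : ℝ) - 1| * |b (m+1)| * |y| ^ ((m+1) - 2) := by
              rw [Real.norm_eq_abs, abs_mul, abs_mul, abs_mul, abs_pow, Nat.abs_cast]
          _ ≤ ((m+1 : ℕ) : ℝ) * ((m+1 : ℕ) : ℝ) * 1 * r ^ ((m+1) - 2) :=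
              mul_le_mul h1 hpow (by positivity) (by positivity)
          _ = ((m+1 : ℕ) : ℝ) ^ 2 * r ^ ((m+1) - 2) := by ring)
    hmem0
    (by
      apply summable_of_ne_finset_zero (s := ({1} : Finset ℕ))
      intro n hn
      simp only [Finset.mem_singleton] at hn
      match n with
      | 0 => simp
      | (m+1) =>
        have hm : m ≠ 0 := by omega
        simp [show m+1-1 = m from rfl, zero_pow hm])
    hmem


lemma T2_pos {a : ℕ → ℝ} (ha0 : a 0 = 1) (hge : ∀ n, -1 ≤ a n) (habs : ∀ n, |a n| ≤ 1)
    {t : ℝ} (ht0 : 0 < t) (ht2 : t ^ 2 < 1 / 2)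
    (hT0 : ∑' n : ℕ, a n * t ^ n = 0)
    (hT1 : ∑' n : ℕ, (n : ℝ) * (a n * t ^ n) = 0) :
    0 < ∑' n : ℕ, (n : ℝ) ^ 2 * (a n * t ^ n) := by
  have ht1 : t < 1 := by nlinarith
  have htabs : |t| < 1 := abs_lt.2 ⟨by linarith, ht1⟩
  have htn : ‖t‖ < 1 := by rwa [Real.norm_eq_abs]
  have h1t : (0:ℝ) < 1 - t := by linarith
  have h1t' : (0:ℝ) < 1 + t := by linarith
  set u : ℝ := (1 - t) / (1 + t) with hudef
  have hu0 : 0 < u := div_pos h1t h1t'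
  -- summability
  have Sa0 : Summable (fun n : ℕ => a n * t ^ n) := by
    simpa using summable_aux habs htabs 0
  have Sa1 : Summable (fun n : ℕ => (n : ℝ) * (a n * t ^ n)) := by
    simpa [pow_one] using summable_aux habs htabs 1
  have Sa2 : Summable (fun n : ℕ => (n : ℝ) ^ 2 * (a n * t ^ n)) := summable_aux habs htabs 2
  have Q0 : Summable (fun n : ℕ => t ^ n) := summable_geometric_of_lt_one ht0.le ht1
  have Q1 : Summable (fun n : ℕ => (n : ℝ) * t ^ n) := by
    have := summable_pow_mul_geometric_of_norm_lt_one (R := ℝ) (r := t) 1 htn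
    simpa using this
  have Q2 : Summable (fun n : ℕ => (n : ℝ) ^ 2 * t ^ n) :=
    summable_pow_mul_geometric_of_norm_lt_one 2 htn
  have SQa : Summable (fun n : ℕ => (1 - (n:ℝ) * u) ^ 2 * (a n * t ^ n)) :=
    ((Sa0.add (Sa1.mul_left (-2 * u))).add (Sa2.mul_left (u ^ 2))).congr (fun n => by ring)
  have SQg : Summable (fun n : ℕ => (1 - (n:ℝ) * u) ^ 2 * t ^ n) :=
    ((Q0.add (Q1.mul_left (-2 * u))).add (Q2.mul_left (u ^ 2))).congr (fun n => by ring)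
  set T2 := ∑' n : ℕ, (n : ℝ) ^ 2 * (a n * t ^ n) with hT2def
  -- value of weighted sum over a
  have hQa : ∑' n : ℕ, (1 - (n:ℝ) * u) ^ 2 * (a n * t ^ n) = u ^ 2 * T2 := by
    have : ∑' n : ℕ, (1 - (n:ℝ) * u) ^ 2 * (a n * t ^ n)
        = (∑' n : ℕ, a n * t ^ n) + ((-2 * u) * ∑' n : ℕ, (n:ℝ) * (a n * t ^ n))
          + (u ^ 2 * ∑' n : ℕ, (n:ℝ) ^ 2 * (a n * t ^ n)) := by
      rw [← tsum_mul_left, ← tsum_mul_left,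
        ← Summable.tsum_add Sa0 (Sa1.mul_left (-2 * u)),
        ← Summable.tsum_add (Sa0.add (Sa1.mul_left (-2 * u))) (Sa2.mul_left (u ^ 2))]
      exact tsum_congr fun n => by ring
    rw [this, hT0, hT1]
    ring
  -- value of weighted geometric sum
  have hG : ∑' n : ℕ, (1 - (n:ℝ) * u) ^ 2 * t ^ n = 1 / (1 - t ^ 2) := by
    have e : ∑' n : ℕ, (1 - (n:ℝ) * u) ^ 2 * t ^ n
        = (∑' n : ℕ, t ^ n) + ((-2 * u) * ∑' n : ℕ, (n:ℝ) * t ^ n)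
          + (u ^ 2 * ∑' n : ℕ, (n:ℝ) ^ 2 * t ^ n) := by
      rw [← tsum_mul_left, ← tsum_mul_left,
        ← Summable.tsum_add Q0 (Q1.mul_left (-2 * u)),
        ← Summable.tsum_add (Q0.add (Q1.mul_left (-2 * u))) (Q2.mul_left (u ^ 2))]
      exact tsum_congr fun n => by ring
    rw [e, tsum_geometric_of_lt_one ht0.le ht1, tsum_coe_mul_geometric_of_norm_lt_one htn,
      tsum_sq_geometric ht0.le ht1, hudef]
    have h2 : (1:ℝ) - t ^ 2 ≠ 0 := by nlinarith
    field_simp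
    ring
  -- lower bound 2 ≤ Qa + G
  have hsum : Summable (fun n : ℕ =>
      (1 - (n:ℝ) * u) ^ 2 * (a n * t ^ n) + (1 - (n:ℝ) * u) ^ 2 * t ^ n) := SQa.add SQg
  have hle : (2:ℝ) ≤ ∑' n : ℕ,
      ((1 - (n:ℝ) * u) ^ 2 * (a n * t ^ n) + (1 - (n:ℝ) * u) ^ 2 * t ^ n) := by
    have h0eq : (1 - ((0:ℕ):ℝ) * u) ^ 2 * (a 0 * t ^ 0) + (1 - ((0:ℕ):ℝ) * u) ^ 2 * t ^ 0
        = 2 := by norm_num [ha0]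
    calc (2:ℝ) = (1 - ((0:ℕ):ℝ) * u) ^ 2 * (a 0 * t ^ 0) + (1 - ((0:ℕ):ℝ) * u) ^ 2 * t ^ 0 :=
          h0eq.symm
      _ ≤ _ := by
          apply Summable.le_tsum hsum 0
          intro j _
          have e : (1 - (j:ℝ) * u) ^ 2 * (a j * t ^ j) + (1 - (j:ℝ) * u) ^ 2 * t ^ j
              = (1 - (j:ℝ) * u) ^ 2 * ((a j + 1) * t ^ j) := by ring
          rw [e]
          exact mul_nonneg (sq_nonneg _)
            (mul_nonneg (by linarith [hge j]) (pow_nonneg ht0.le j))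
  rw [Summable.tsum_add SQa SQg, hQa, hG] at hle
  -- conclude
  have hglt : 1 / (1 - t ^ 2) < 2 := by
    rw [div_lt_iff₀ (by nlinarith : (0:ℝ) < 1 - t ^ 2)]
    nlinarith
  have hQpos : 0 < u ^ 2 * T2 := by linarith
  nlinarith [sq_nonneg u, hQpos, hu0]

end Stmt19Aux

/-- If `λ ∈ (0, 2^{-1/2})` is a double zero of some `f ∈ ℬ` having
infinitely many coefficients different from `-1`, then `(λ, λ)` is in the closure of
`𝒩₊`. -/

theorem stmt19 (lam : ℝ) (hlam0 : 0 < lam) (hlam1 : lam < (2 : ℝ) ^ (-(1 / 2) : ℝ))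
    (a : ℕ → ℝ) (ha : memB a) (h0 : seriesFun a lam = 0) (h1 : deriv (seriesFun a) lam = 0)
    (hinf : {n : ℕ | a n ≠ -1}.Infinite) :
    ∀ ε > (0 : ℝ), ∃ (g : ℕ → ℝ) (γ' lam' : ℝ), memB g ∧
      lam - ε < γ' ∧ γ' < lam' ∧ lam' < lam + ε ∧ 0 < γ' ∧ lam' < 1 ∧
      seriesFun g γ' = 0 ∧ seriesFun g lam' = 0 := by
  intro ε hε
  classical
  obtain ⟨ha0, haI⟩ := ha
  have habs : ∀ n, |a n| ≤ 1 := by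
    intro n
    rcases Nat.eq_zero_or_pos n with h | h
    · subst h; rw [ha0]; norm_num
    · rcases haI n h with h' | h' | h' <;> rw [h'] <;> norm_num
  have hge : ∀ n, -1 ≤ a n := fun n => (abs_le.1 (habs n)).1
  have ht2 : lam ^ 2 < 1 / 2 := by
    have h2 : ((2:ℝ) ^ (-(1/2) : ℝ)) ^ (2:ℕ) = 1 / 2 := by
      rw [← Real.rpow_natCast ((2:ℝ) ^ (-(1/2):ℝ)) 2,
        ← Real.rpow_mul (by norm_num : (0:ℝ) ≤ 2)]
      norm_num
    calc lam ^ 2 < ((2:ℝ) ^ (-(1/2):ℝ)) ^ (2:ℕ) :=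
          pow_lt_pow_left₀ hlam1 hlam0.le (by norm_num)
      _ = 1 / 2 := h2
  have ht1 : lam < 1 := by nlinarith
  have htabs : |lam| < 1 := abs_lt.2 ⟨by linarith, ht1⟩
  have hT0 : ∑' n : ℕ, a n * lam ^ n = 0 := h0
  have hD1 := Stmt19Aux.hasDerivAt_seriesFun habs htabs
  have hF1 : ∑' n : ℕ, (n:ℝ) * a n * lam ^ (n-1) = 0 := by
    rw [← hD1.deriv]; exact h1
  have hT1 : ∑' n : ℕ, (n:ℝ) * (a n * lam ^ n) = 0 := by
    have e : ∑' n : ℕ, (n:ℝ) * (a n * lam ^ n)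
        = lam * ∑' n : ℕ, (n:ℝ) * a n * lam ^ (n-1) := by
      rw [← tsum_mul_left]
      refine tsum_congr fun n => ?_
      match n with
      | 0 => simp
      | (m+1) => rw [show m+1-1 = m from rfl]; push_cast; ring
    rw [e, hF1, mul_zero]
  have hT2 := Stmt19Aux.T2_pos ha0 hge habs hlam0 ht2 hT0 hT1
  have hD2 := Stmt19Aux.hasDerivAt_derivSeries habs htabs
  have hE2pos : 0 < ∑' n : ℕ, (n:ℝ) * ((n:ℝ) - 1) * a n * lam ^ (n-2) := by
    by_contra hle
    push_neg at hle
    have Sa1 : Summable (fun n : ℕ => (n:ℝ) * (a n * lam ^ n)) := by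
      simpa [pow_one] using Stmt19Aux.summable_aux habs htabs 1
    have Sa2 : Summable (fun n : ℕ => (n:ℝ)^2 * (a n * lam ^ n)) :=
      Stmt19Aux.summable_aux habs htabs 2
    have SB : Summable (fun n : ℕ => lam ^ 2 * ((n:ℝ) * ((n:ℝ)-1) * a n * lam ^ (n-2))) :=
      (Sa2.sub Sa1).congr (fun n => by
        match n with
        | 0 => simp
        | 1 => norm_num
        | (m+2) => rw [show m+2-2 = m from rfl]; push_cast; ring)
    have hrel : ∑' n : ℕ, (n:ℝ)^2 * (a n * lam ^ n)
        = lam^2 * (∑' n : ℕ, (n:ℝ) * ((n:ℝ) - 1) * a n * lam ^ (n-2))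
          + ∑' n : ℕ, (n:ℝ) * (a n * lam ^ n) := by
      rw [← tsum_mul_left, ← Summable.tsum_add SB Sa1]
      refine tsum_congr fun n => ?_
      match n with
      | 0 => simp
      | 1 => norm_num
      | (m+2) => rw [show m+2-2 = m from rfl]; push_cast; ring
    rw [hT1, add_zero] at hrel
    nlinarith [sq_nonneg lam, hT2, hle, hrel]
  set F1 : ℝ → ℝ := fun y => ∑' n : ℕ, (n:ℝ) * a n * y ^ (n-1) with hF1def
  have hF1lam : F1 lam = 0 := hF1
  have hslope : Tendsto (slope F1 lam) (𝓝[≠] lam)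
      (𝓝 (∑' n : ℕ, (n:ℝ) * ((n:ℝ) - 1) * a n * lam ^ (n-2))) :=
    hasDerivAt_iff_tendsto_slope.1 hD2
  have hev : ∀ᶠ x in 𝓝[≠] lam, 0 < slope F1 lam x := hslope.eventually (lt_mem_nhds hE2pos)
  rw [eventually_nhdsWithin_iff, Metric.eventually_nhds_iff] at hev
  obtain ⟨δ₁, hδ₁pos, hδ₁⟩ := hev
  set δ := min (min (δ₁/2) (ε/2)) (min (lam/2) ((1-lam)/4)) with hδdef
  have hδpos : 0 < δ := by
    apply lt_min (lt_min (by linarith) (by linarith)) (lt_min (by linarith) (by linarith))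
  have hδ1 : δ < δ₁ :=
    lt_of_le_of_lt (le_trans (min_le_left _ _) (min_le_left _ _)) (by linarith)
  have hδε : δ ≤ ε/2 := le_trans (min_le_left _ _) (min_le_right _ _)
  have hδlam : δ ≤ lam/2 := le_trans (min_le_right _ _) (min_le_left _ _)
  have hδ1lam : δ ≤ (1-lam)/4 := le_trans (min_le_right _ _) (min_le_right _ _)
  have hsign : ∀ x : ℝ, x ≠ lam → |x - lam| < δ₁ → 0 < F1 x / (x - lam) := by
    intro x hne hd
    have h := hδ₁ (show dist x lam < δ₁ by rwa [Real.dist_eq]) (by simpa using hne)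
    rwa [slope_def_field, hF1lam, sub_zero] at h
  have hpos_right : ∀ x, lam < x → x < lam + δ → 0 < F1 x := by
    intro x hx1 hx2
    have hd : |x - lam| < δ₁ := by rw [abs_of_pos (by linarith)]; linarith
    have h := hsign x (ne_of_gt hx1) hd
    have hx0 : (0:ℝ) < x - lam := by linarith
    have h2 := mul_pos h hx0
    rwa [div_mul_cancel₀ _ (ne_of_gt hx0)] at h2
  have hneg_left : ∀ x, lam - δ < x → x < lam → F1 x < 0 := by
    intro x hx1 hx2
    have hd : |x - lam| < δ₁ := by rw [abs_of_neg (by linarith)]; linarith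
    have h := hsign x (ne_of_lt hx2) hd
    have hx0 : x - lam < 0 := by linarith
    have h2 := mul_neg_of_pos_of_neg h hx0
    rwa [div_mul_cancel₀ _ (ne_of_lt hx0)] at h2
  have hball : ∀ x ∈ Icc (lam - δ) (lam + δ), |x| < 1 := by
    intro x hx
    rw [abs_lt]
    exact ⟨by linarith [hx.1], by linarith [hx.2]⟩
  have hderiv : ∀ x ∈ Icc (lam - δ) (lam + δ), HasDerivAt (seriesFun a) (F1 x) x :=
    fun x hx => Stmt19Aux.hasDerivAt_seriesFun habs (hball x hx)
  have hcont : ContinuousOn (seriesFun a) (Icc (lam - δ) (lam + δ)) :=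
    fun x hx => ((hderiv x hx).differentiableAt.continuousAt).continuousWithinAt
  have hsub1 : Icc lam (lam + δ) ⊆ Icc (lam - δ) (lam + δ) :=
    Icc_subset_Icc (by linarith) le_rfl
  have hsub2 : Icc (lam - δ) lam ⊆ Icc (lam - δ) (lam + δ) :=
    Icc_subset_Icc le_rfl (by linarith)
  have hmono : StrictMonoOn (seriesFun a) (Icc lam (lam + δ)) := by
    apply strictMonoOn_of_deriv_pos (convex_Icc _ _) (hcont.mono hsub1)
    intro x hx
    rw [interior_Icc] at hx
    rw [(hderiv x (hsub1 ⟨hx.1.le, hx.2.le⟩)).deriv]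
    exact hpos_right x hx.1 hx.2
  have hanti : StrictAntiOn (seriesFun a) (Icc (lam - δ) lam) := by
    apply strictAntiOn_of_deriv_neg (convex_Icc _ _) (hcont.mono hsub2)
    intro x hx
    rw [interior_Icc] at hx
    rw [(hderiv x (hsub2 ⟨hx.1.le, hx.2.le⟩)).deriv]
    exact hneg_left x hx.1 hx.2
  have hfplus : 0 < seriesFun a (lam + δ) := by
    have := hmono (left_mem_Icc.2 (by linarith)) (right_mem_Icc.2 (by linarith)) (by linarith)
    rwa [h0] at this
  have hfminus : 0 < seriesFun a (lam - δ) := by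
    have := hanti (left_mem_Icc.2 (by linarith)) (right_mem_Icc.2 (by linarith)) (by linarith)
    rwa [h0] at this
  set m := min (seriesFun a (lam - δ)) (seriesFun a (lam + δ)) with hmdef
  have hm : 0 < m := lt_min hfminus hfplus
  have hr'0 : 0 < lam + δ := by linarith
  have hr'1 : lam + δ < 1 := by linarith
  obtain ⟨N, hN⟩ := exists_pow_lt_of_lt_one hm hr'1
  obtain ⟨p, hpmem, hpN⟩ := hinf.exists_gt N
  have hp1 : 1 ≤ p := by omega
  have hrn : (lam + δ) ^ p < m :=
    lt_of_le_of_lt (pow_le_pow_of_le_one hr'0.le hr'1.le hpN.le) hN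
  set g : ℕ → ℝ := fun k => if k = p then a k - 1 else a k with hgdef
  have hgB : memB g := by
    rw [hgdef]
    refine ⟨?_, ?_⟩
    · simp only [if_neg (by omega : ¬ (0 = p))]
      exact ha0
    · intro k hk
      by_cases hkp : k = p
      · simp only [if_pos hkp]
        rcases haI k (by omega) with h' | h' | h'
        · rw [hkp] at h'; exact absurd h' hpmem
        · left; rw [h']; norm_num
        · right; left; rw [h']; norm_num
      · simp only [if_neg hkp]
        exact haI k hk
  have hgval : ∀ x : ℝ, |x| < 1 → seriesFun g x = seriesFun a x - x ^ p := by
    intro x hx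
    have hsa : Summable (fun k : ℕ => a k * x ^ k) := by
      simpa using Stmt19Aux.summable_aux habs hx 0
    have hite : Summable (fun k : ℕ => if k = p then x ^ p else 0) := by
      apply summable_of_ne_finset_zero (s := ({p} : Finset ℕ))
      intro k hk
      simp only [Finset.mem_singleton] at hk
      simp [hk]
    have e : (fun k : ℕ => g k * x ^ k)
        = fun k : ℕ => a k * x ^ k - (if k = p then x ^ p else 0) := by
      funext k
      by_cases hkp : k = p
      · subst hkp
        show (if k = k then a k - 1 else a k) * x ^ k = a k * x ^ k - if k = k then x ^ k else 0
        rw [if_pos rfl, if_pos rfl]; ring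
      · show (if k = p then a k - 1 else a k) * x ^ k = a k * x ^ k - if k = p then x ^ p else 0
        rw [if_neg hkp, if_neg hkp]; ring
    show ∑' k, g k * x ^ k = (∑' k, a k * x ^ k) - x ^ p
    rw [e, Summable.tsum_sub hsa hite, tsum_ite_eq]
  have hcontG : ContinuousOn (fun x => seriesFun a x - x ^ p) (Icc (lam - δ) (lam + δ)) :=
    hcont.sub (Continuous.continuousOn (continuous_pow p))
  have hGlam : seriesFun a lam - lam ^ p < 0 := by
    rw [h0]
    have := pow_pos hlam0 p
    linarith
  have hGright : 0 < seriesFun a (lam + δ) - (lam + δ) ^ p := by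
    have h2 : (lam+δ)^p < seriesFun a (lam + δ) :=
      lt_of_lt_of_le hrn (min_le_right _ _)
    linarith
  have hGleft : 0 < seriesFun a (lam - δ) - (lam - δ) ^ p := by
    have hple : (lam - δ)^p ≤ (lam + δ)^p := pow_le_pow_left₀ (by linarith) (by linarith) p
    have h2 : (lam-δ)^p < seriesFun a (lam - δ) :=
      lt_of_le_of_lt hple (lt_of_lt_of_le hrn (min_le_left _ _))
    linarith
  obtain ⟨γ', hγ'mem, hγ'⟩ := intermediate_value_Ioo' (by linarith : lam - δ ≤ lam)
    (hcontG.mono hsub2)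
    (show (0:ℝ) ∈ Ioo (seriesFun a lam - lam ^ p) (seriesFun a (lam - δ) - (lam - δ) ^ p) from
      ⟨hGlam, hGleft⟩)
  obtain ⟨lam', hlam'mem, hlam'⟩ := intermediate_value_Ioo (by linarith : lam ≤ lam + δ)
    (hcontG.mono hsub1)
    (show (0:ℝ) ∈ Ioo (seriesFun a lam - lam ^ p) (seriesFun a (lam + δ) - (lam + δ) ^ p) from
      ⟨hGlam, hGright⟩)
  refine ⟨g, γ', lam', hgB, ?_, ?_, ?_, ?_, ?_, ?_, ?_⟩
  · linarith [hγ'mem.1]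
  · linarith [hγ'mem.2, hlam'mem.1]
  · linarith [hlam'mem.2]
  · linarith [hγ'mem.1]
  · linarith [hlam'mem.2]
  · rw [hgval γ' (by rw [abs_lt]; exact ⟨by linarith [hγ'mem.1], by linarith [hγ'mem.2]⟩)]
    exact hγ'
  · rw [hgval lam' (by rw [abs_lt]; exact ⟨by linarith [hlam'mem.1], by linarith [hlam'mem.2]⟩)]
    exact hlam'
end
end
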